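/- arXiv:2105.11778 — 10 statements merged into one kernel-verified Lean document; each statement's English description precedes it below -/
import Mathlib

section
/- Let $(X,d)$ be a generalized complete metric space and $T:X\to X$ strictly contractive with constant $\Lambda<1$, and suppose $d(T^{k+1}x,T^k x)<\infty$ for some $x\in X$ and integer $k\ge 0$. Then $T$ has a unique fixed point $x^*$ in the set $X^* = \{y\in X : d(T^k x, y)<\infty\}$, and for every $y\in X^*$ one has $d(y,x^*)\le \frac{1}{1-\Lambda} d(Ty,y)$. -/
open scoped ENNReal
open Filter Topology

/-- Diaz–Margolis fixed point alternative, parts (b) and (c): `T` has a unique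
fixed point `x*` in `X* = {y : d (T^[k] x) y < ∞}`, and every `y ∈ X*`
satisfies `d y x* ≤ (1 - Λ)⁻¹ * d (T y) y`. -/
theorem diaz_margolis_uniqueness_estimate {X : Type*} [Nonempty X]
    (d : X → X → ℝ≥0∞)
    (hd_self : ∀ x y, d x y = 0 ↔ x = y)
    (hd_symm : ∀ x y, d x y = d y x)
    (hd_tri : ∀ x y z, d x z ≤ d x y + d y z)
    (hd_complete : ∀ u : ℕ → X,
      (∀ ε : ℝ≥0∞, 0 < ε → ∃ N, ∀ m ≥ N, ∀ n ≥ N, d (u m) (u n) < ε) →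
      ∃ x : X, ∀ ε : ℝ≥0∞, 0 < ε → ∃ N, ∀ n ≥ N, d (u n) x < ε)
    (T : X → X) (Λ : ℝ≥0∞) (hΛ : Λ < 1)
    (hT : ∀ x y, d (T x) (T y) ≤ Λ * d x y)
    (k : ℕ) (x : X) (hk : d (T^[k+1] x) (T^[k] x) < ⊤) :
    ∃ xs : X, (T xs = xs ∧ d (T^[k] x) xs < ⊤) ∧
      (∀ y : X, T y = y → d (T^[k] x) y < ⊤ → y = xs) ∧
      (∀ y : X, d (T^[k] x) y < ⊤ → d y xs ≤ (1 - Λ)⁻¹ * d (T y) y) := by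
  classical
  set z := T^[k] x with hz
  have hTz : d (T z) z < ⊤ := by
    simpa [hz, Function.iterate_succ_apply'] using hk
  have hΛtop : Λ ≠ ⊤ := (hΛ.trans ENNReal.one_lt_top).ne
  have hsub : (1 : ℝ≥0∞) - Λ ≠ 0 := (tsub_pos_iff_lt.mpr hΛ).ne'
  have hinv : ((1 : ℝ≥0∞) - Λ)⁻¹ ≠ ⊤ := ENNReal.inv_ne_top.mpr hsub
  -- iterated contraction
  have hiter : ∀ n (a b : X), d (T^[n] a) (T^[n] b) ≤ Λ ^ n * d a b := by
    intro n
    induction n with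
    | zero => intro a b; simp
    | succ n ih =>
      intro a b
      calc d (T^[n+1] a) (T^[n+1] b) = d (T^[n] (T a)) (T^[n] (T b)) := by
            simp [Function.iterate_succ_apply]
        _ ≤ Λ ^ n * d (T a) (T b) := ih _ _
        _ ≤ Λ ^ n * (Λ * d a b) := by gcongr; exact hT a b
        _ = Λ ^ (n+1) * d a b := by ring
  -- geometric bound
  have hgeo : ∀ (y : X) (n : ℕ), d y (T^[n] y) ≤ (1 - Λ)⁻¹ * d (T y) y := by
    intro y n
    have hsum : d y (T^[n] y) ≤ (∑ i ∈ Finset.range n, Λ ^ i) * d (T y) y := by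
      induction n with
      | zero => simp [(hd_self y y).mpr rfl]
      | succ n ih =>
        calc d y (T^[n+1] y) ≤ d y (T^[n] y) + d (T^[n] y) (T^[n+1] y) :=
              hd_tri _ _ _
          _ ≤ (∑ i ∈ Finset.range n, Λ ^ i) * d (T y) y + Λ ^ n * d (T y) y := by
              refine add_le_add ih ?_
              calc d (T^[n] y) (T^[n+1] y) = d (T^[n] y) (T^[n] (T y)) := by
                    simp [Function.iterate_succ_apply]
                _ ≤ Λ ^ n * d y (T y) := hiter n _ _
                _ = Λ ^ n * d (T y) y := by rw [hd_symm]
          _ = (∑ i ∈ Finset.range (n+1), Λ ^ i) * d (T y) y := by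
              rw [Finset.sum_range_succ, add_mul]
    refine hsum.trans ?_
    gcongr
    calc (∑ i ∈ Finset.range n, Λ ^ i) ≤ ∑' i, Λ ^ i := ENNReal.sum_le_tsum _
      _ = (1 - Λ)⁻¹ := ENNReal.tsum_geometric Λ
  set C : ℝ≥0∞ := (1 - Λ)⁻¹ * d (T z) z with hC
  have hCtop : C ≠ ⊤ := ENNReal.mul_ne_top hinv hTz.ne
  have hbound : ∀ m n : ℕ, m ≤ n → d (T^[m] z) (T^[n] z) ≤ Λ ^ m * C := by
    intro m n hmn
    obtain ⟨j, rfl⟩ := Nat.exists_eq_add_of_le hmn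
    calc d (T^[m] z) (T^[m+j] z) = d (T^[m] z) (T^[m] (T^[j] z)) := by
          rw [Function.iterate_add_apply]
      _ ≤ Λ ^ m * d z (T^[j] z) := hiter m _ _
      _ ≤ Λ ^ m * C := by gcongr; exact hgeo z j
  have htend : Tendsto (fun m : ℕ => Λ ^ m * C) atTop (𝓝 0) := by
    have h := ENNReal.Tendsto.mul_const
      (ENNReal.tendsto_pow_atTop_nhds_zero_of_lt_one hΛ) (Or.inr hCtop)
    simpa using h
  have hpowmono : ∀ m n : ℕ, m ≤ n → Λ ^ n ≤ Λ ^ m := fun m n h =>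
    pow_le_pow_of_le_one zero_le hΛ.le h
  -- Cauchy
  obtain ⟨xs, hxs⟩ := hd_complete (fun n => T^[n] z) (by
    intro ε hε
    obtain ⟨N, hN⟩ := (htend.eventually_lt_const hε).exists_forall_of_atTop
    refine ⟨N, ?_⟩
    intro m hm n hn
    rcases le_total m n with h | h
    · exact lt_of_le_of_lt ((hbound m n h).trans (mul_le_mul_left (hpowmono N m hm) C)) (hN N le_rfl)
    · rw [hd_symm]
      exact lt_of_le_of_lt ((hbound n m h).trans (mul_le_mul_left (hpowmono N n hn) C)) (hN N le_rfl))
  -- fixed point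
  have hfix : T xs = xs := by
    have h0 : ∀ ε : ℝ≥0∞, 0 < ε → d (T xs) xs < ε := by
      intro ε hε
      obtain ⟨N, hN⟩ := hxs (ε / 2) (ENNReal.half_pos hε.ne')
      have h1 : d (T^[N+1] z) xs < ε / 2 := hN (N+1) (by omega)
      have h2 : d (T xs) (T^[N+1] z) < ε / 2 := by
        have : d (T xs) (T^[N+1] z) ≤ Λ * d (T^[N] z) xs := by
          calc d (T xs) (T^[N+1] z) = d (T xs) (T (T^[N] z)) := by
                rw [Function.iterate_succ_apply']
            _ ≤ Λ * d xs (T^[N] z) := hT _ _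
            _ = Λ * d (T^[N] z) xs := by rw [hd_symm]
        refine lt_of_le_of_lt this ?_
        calc Λ * d (T^[N] z) xs ≤ 1 * d (T^[N] z) xs := mul_le_mul_left hΛ.le _
          _ = d (T^[N] z) xs := one_mul _
          _ < ε / 2 := hN N le_rfl
      calc d (T xs) xs ≤ d (T xs) (T^[N+1] z) + d (T^[N+1] z) xs := hd_tri _ _ _
        _ < ε / 2 + ε / 2 := ENNReal.add_lt_add h2 h1
        _ = ε := ENNReal.add_halves ε
    have : d (T xs) xs = 0 := by
      by_contra h
      exact lt_irrefl _ (h0 _ (pos_iff_ne_zero.mpr h))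
    exact (hd_self _ _).mp this
  -- z is at finite distance from xs
  have hzxs : d z xs < ⊤ := by
    obtain ⟨N, hN⟩ := hxs 1 one_pos
    calc d z xs ≤ d z (T^[N] z) + d (T^[N] z) xs := hd_tri _ _ _
      _ < ⊤ := ENNReal.add_lt_top.mpr
          ⟨lt_of_le_of_lt (hgeo z N) hCtop.lt_top,
           lt_of_lt_of_le (hN N le_rfl) le_top⟩
  refine ⟨xs, ⟨hfix, hzxs⟩, ?_, ?_⟩
  · -- uniqueness
    intro y hy hyz
    have hyx : d y xs < ⊤ := by
      calc d y xs ≤ d y z + d z xs := hd_tri _ _ _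
        _ < ⊤ := ENNReal.add_lt_top.mpr ⟨by rw [hd_symm]; exact hyz, hzxs⟩
    by_contra hne
    have h0 : d y xs ≠ 0 := fun h => hne ((hd_self _ _).mp h)
    have : d y xs ≤ Λ * d y xs := by
      calc d y xs = d (T y) (T xs) := by rw [hy, hfix]
        _ ≤ Λ * d y xs := hT _ _
    have hlt : Λ * d y xs < 1 * d y xs :=
      ENNReal.mul_lt_mul_left h0 hyx.ne hΛ
    rw [one_mul] at hlt
    exact absurd this (not_le_of_gt hlt)
  · -- quantitative estimate
    intro y hyz
    have hyzfin : d y z < ⊤ := by rw [hd_symm]; exact hyz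
    have hTy : d (T y) y < ⊤ := by
      calc d (T y) y ≤ d (T y) (T z) + d (T z) y := hd_tri _ _ _
        _ ≤ Λ * d y z + (d (T z) z + d z y) := by
            gcongr ?_ + ?_
            · exact hT _ _
            · exact hd_tri _ _ _
        _ < ⊤ := by
            refine ENNReal.add_lt_top.mpr ⟨?_, ENNReal.add_lt_top.mpr ⟨hTz, hyz⟩⟩
            exact ENNReal.mul_lt_top hΛtop.lt_top hyzfin
    have htendy : Filter.Tendsto (fun n : ℕ => Λ ^ n * d y z) Filter.atTop (nhds 0) := by
      have h := ENNReal.Tendsto.mul_const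
        (ENNReal.tendsto_pow_atTop_nhds_zero_of_lt_one hΛ) (Or.inr hyzfin.ne)
      simpa using h
    refine ENNReal.le_of_forall_pos_le_add ?_
    intro ε hε _
    have hε2 : (0 : ℝ≥0∞) < (ε : ℝ≥0∞) / 2 :=
      ENNReal.half_pos (by exact_mod_cast hε.ne')
    obtain ⟨N1, hN1⟩ := (htendy.eventually_lt_const hε2).exists_forall_of_atTop
    obtain ⟨N2, hN2⟩ := hxs ((ε : ℝ≥0∞) / 2) hε2
    set n := max N1 N2 with hn
    calc d y xs ≤ d y (T^[n] y) + d (T^[n] y) xs := hd_tri _ _ _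
      _ ≤ (1 - Λ)⁻¹ * d (T y) y + (d (T^[n] y) (T^[n] z) + d (T^[n] z) xs) := by
          gcongr ?_ + ?_
          · exact hgeo y n
          · exact hd_tri _ _ _
      _ ≤ (1 - Λ)⁻¹ * d (T y) y + (Λ ^ n * d y z + d (T^[n] z) xs) := by
          gcongr
          exact hiter n _ _
      _ ≤ (1 - Λ)⁻¹ * d (T y) y + ((ε : ℝ≥0∞) / 2 + (ε : ℝ≥0∞) / 2) := by
          gcongr
          · exact (hN1 n (le_max_left _ _)).le
          · exact (hN2 n (le_max_right _ _)).le
      _ = (1 - Λ)⁻¹ * d (T y) y + ε := by rw [ENNReal.add_halves]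
end

section
/- Let $I=[t_0,t_0+r]$ and let $f:I\times\mathbb{R}\to\mathbb{R}$ be continuous and satisfy $|f(t,y_1)-f(t,y_2)|\le L|y_1-y_2|$ for all $t\in I$, $y_1,y_2\in\mathbb{R}$, with $L>0$. Let $\varphi:I\to(0,\infty)$ be a nondecreasing continuous function and let $y:I\to\mathbb{R}$ be continuous with $|y(t)-\int_{t_0}^{t} f(s,y(s))\,ds| \le \varphi(t)$ for all $t\in I$. Then for every fixed $\eta>L$ there exists a unique continuous $y_0:I\to\mathbb{R}$ satisfying $y_0(t)=\int_{t_0}^{t} f(s,y_0(s))\,ds$ for all $t\in I$ and $|y(t)-y_0(t)|\le \frac{\varphi(t)\,e^{\eta r}}{1-L/\eta}$ for all $t\in I$. -/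
open Set intervalIntegral MeasureTheory Filter

lemma vHUR_int_pow (t₀ t : ℝ) (n : ℕ) :
    ∫ s in t₀..t, (s - t₀) ^ n = (t - t₀) ^ (n + 1) / (n + 1) := by
  rw [intervalIntegral.integral_comp_sub_right (fun x => x ^ n) t₀, sub_self,
    integral_pow]
  simp

lemma vHUR_gronwall (t₀ r L : ℝ) (hr : 0 < r) (hL : 0 ≤ L)
    (a d : ℝ → ℝ)
    (hamono : MonotoneOn a (Set.Icc t₀ (t₀ + r)))
    (ha0 : ∀ t ∈ Set.Icc t₀ (t₀ + r), 0 ≤ a t)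
    (hd : ContinuousOn d (Set.Icc t₀ (t₀ + r)))
    (hd0 : ∀ t ∈ Set.Icc t₀ (t₀ + r), 0 ≤ d t)
    (hineq : ∀ t ∈ Set.Icc t₀ (t₀ + r), d t ≤ a t + L * ∫ s in t₀..t, d s) :
    ∀ t ∈ Set.Icc t₀ (t₀ + r), d t ≤ a t * Real.exp (L * r) := by
  have ht01 : t₀ ≤ t₀ + r := by linarith
  obtain ⟨M, hM⟩ := isCompact_Icc.exists_bound_of_continuousOn hd
  have hM' : ∀ t ∈ Set.Icc t₀ (t₀ + r), d t ≤ M := fun t htI =>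
    (le_abs_self _).trans (hM t htI)
  have hM0 : 0 ≤ M := le_trans (hd0 t₀ (by constructor <;> linarith))
    (hM' t₀ (by constructor <;> linarith))
  -- key induction
  have key : ∀ n : ℕ, ∀ t ∈ Set.Icc t₀ (t₀ + r),
      d t ≤ a t * (∑ k ∈ Finset.range n, (L * (t - t₀)) ^ k / (Nat.factorial k)) +
        L ^ n * (t - t₀) ^ n / (Nat.factorial n) * M := by
    intro n
    induction n with
    | zero => intro t htI; simpa using hM' t htI
    | succ n ih =>
      intro t htI
      obtain ⟨ht0, htr⟩ := htI
      have hsub : Set.Icc t₀ t ⊆ Set.Icc t₀ (t₀ + r) := Set.Icc_subset_Icc le_rfl htr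
      have hdint : IntervalIntegrable d volume t₀ t := by
        apply ContinuousOn.intervalIntegrable
        rw [Set.uIcc_of_le ht0]
        exact hd.mono hsub
      have hgc : Continuous (fun s : ℝ =>
          a t * (∑ k ∈ Finset.range n, (L * (s - t₀)) ^ k / (Nat.factorial k)) +
            L ^ n * (s - t₀) ^ n / (Nat.factorial n) * M) := by
        apply Continuous.add
        · exact continuous_const.mul (continuous_finset_sum _ fun k _ => by fun_prop)
        · fun_prop
      have step1 : ∫ s in t₀..t, d s ≤
          ∫ s in t₀..t, (a t * (∑ k ∈ Finset.range n, (L * (s - t₀)) ^ k / (Nat.factorial k)) +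
            L ^ n * (s - t₀) ^ n / (Nat.factorial n) * M) := by
        apply intervalIntegral.integral_mono_on ht0 hdint (hgc.intervalIntegrable _ _)
        intro s hs
        have hsI : s ∈ Set.Icc t₀ (t₀ + r) := hsub hs
        refine (ih s hsI).trans ?_
        gcongr
        · exact Finset.sum_nonneg fun k _ => div_nonneg
            (pow_nonneg (mul_nonneg hL (by linarith [hs.1])) k) (Nat.cast_nonneg _)
        · exact hamono hsI ⟨ht0, htr⟩ hs.2
      -- compute the RHS integral
      have hterm : ∀ k : ℕ, ∫ s in t₀..t, (L * (s - t₀)) ^ k / (Nat.factorial k : ℝ) =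
          L ^ k / (Nat.factorial k) * ((t - t₀) ^ (k + 1) / (k + 1)) := by
        intro k
        have : (fun s : ℝ => (L * (s - t₀)) ^ k / (Nat.factorial k : ℝ)) =
            fun s : ℝ => (L ^ k / (Nat.factorial k : ℝ)) * (s - t₀) ^ k := by
          funext s; rw [mul_pow]; ring
        rw [this, intervalIntegral.integral_const_mul, vHUR_int_pow]
      have hfun : (fun s : ℝ =>
          a t * (∑ k ∈ Finset.range n, (L * (s - t₀)) ^ k / (Nat.factorial k)) +
            L ^ n * (s - t₀) ^ n / (Nat.factorial n) * M) =
          (fun s : ℝ => (∑ k ∈ Finset.range n,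
              (a t * L ^ k / (Nat.factorial k)) * (s - t₀) ^ k) +
            (L ^ n / (Nat.factorial n) * M) * (s - t₀) ^ n) := by
        funext s
        rw [Finset.mul_sum]
        congr 1
        · exact Finset.sum_congr rfl fun k _ => by rw [mul_pow]; ring
        · ring
      have hint2 : ∫ s in t₀..t, (a t * (∑ k ∈ Finset.range n,
            (L * (s - t₀)) ^ k / (Nat.factorial k)) +
            L ^ n * (s - t₀) ^ n / (Nat.factorial n) * M) =
          (∑ k ∈ Finset.range n,
            (a t * L ^ k / (Nat.factorial k)) * ((t - t₀) ^ (k + 1) / (k + 1))) +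
            (L ^ n / (Nat.factorial n) * M) * ((t - t₀) ^ (n + 1) / (n + 1)) := by
        have hc1 : Continuous fun s : ℝ => ∑ k ∈ Finset.range n,
            (a t * L ^ k / (Nat.factorial k)) * (s - t₀) ^ k :=
          continuous_finset_sum _ fun k _ => by fun_prop
        have hc2 : Continuous fun s : ℝ => (L ^ n / (Nat.factorial n) * M) * (s - t₀) ^ n := by
          fun_prop
        rw [hfun, intervalIntegral.integral_add
          (hc1.intervalIntegrable _ _) (hc2.intervalIntegrable _ _),
          intervalIntegral.integral_finset_sum
          (fun k _ => by apply Continuous.intervalIntegrable; fun_prop)]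
        simp only [intervalIntegral.integral_const_mul, vHUR_int_pow]
      calc d t ≤ a t + L * ∫ s in t₀..t, d s := hineq t ⟨ht0, htr⟩
        _ ≤ a t + L * ∫ s in t₀..t, (a t * (∑ k ∈ Finset.range n,
              (L * (s - t₀)) ^ k / (Nat.factorial k)) +
              L ^ n * (s - t₀) ^ n / (Nat.factorial n) * M) :=
          add_le_add_right (mul_le_mul_of_nonneg_left step1 hL) _
        _ = a t * (∑ k ∈ Finset.range (n + 1), (L * (t - t₀)) ^ k / (Nat.factorial k)) +
            L ^ (n + 1) * (t - t₀) ^ (n + 1) / (Nat.factorial (n + 1)) * M := by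
          rw [hint2, mul_add, Finset.mul_sum]
          have h1 : ∀ k ∈ Finset.range n,
              L * ((a t * L ^ k / (Nat.factorial k)) * ((t - t₀) ^ (k + 1) / (k + 1))) =
              a t * ((L * (t - t₀)) ^ (k + 1) / (Nat.factorial (k + 1))) := by
            intro k _
            have hk : (0:ℝ) < Nat.factorial k := by exact_mod_cast Nat.factorial_pos k
            rw [Nat.factorial_succ, mul_pow]
            push_cast
            field_simp
            ring
          rw [Finset.sum_congr rfl h1, Finset.sum_range_succ', mul_add, Finset.mul_sum]
          have h2 : L * ((L ^ n / (Nat.factorial n) * M) * ((t - t₀) ^ (n + 1) / (n + 1))) =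
              L ^ (n + 1) * (t - t₀) ^ (n + 1) / (Nat.factorial (n + 1)) * M := by
            have hn : (0:ℝ) < Nat.factorial n := by exact_mod_cast Nat.factorial_pos n
            rw [Nat.factorial_succ]
            push_cast
            field_simp
            ring
          simp only [pow_zero, Nat.factorial_zero, Nat.cast_one, div_one]
          linarith [h2]
  -- conclude from key by letting n → ∞
  intro t htI
  obtain ⟨ht0, htr⟩ := htI
  have hbound : ∀ n : ℕ, d t ≤ a t * Real.exp (L * r) + (L * r) ^ n / (Nat.factorial n) * M := by
    intro n
    refine (key n t ⟨ht0, htr⟩).trans (add_le_add ?_ ?_)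
    · have := Real.sum_le_exp_of_nonneg (mul_nonneg hL (by linarith : (0:ℝ) ≤ t - t₀)) n
      have h2 : Real.exp (L * (t - t₀)) ≤ Real.exp (L * r) :=
        Real.exp_le_exp.2 (mul_le_mul_of_nonneg_left (by linarith) hL)
      exact mul_le_mul_of_nonneg_left (this.trans h2) (ha0 t ⟨ht0, htr⟩)
    · rw [mul_pow]
      gcongr
      · linarith
  have hlim : Filter.Tendsto
      (fun n : ℕ => a t * Real.exp (L * r) + (L * r) ^ n / (Nat.factorial n) * M)
      Filter.atTop (nhds (a t * Real.exp (L * r) + 0 * M)) :=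
    Filter.Tendsto.const_add _ ((FloorSemiring.tendsto_pow_div_factorial_atTop (L * r)).mul_const M)
  have := ge_of_tendsto' hlim hbound
  linarith

lemma vHUR_exists (t₀ r L : ℝ) (hr : 0 < r) (hL : 0 < L)
    (f : ℝ → ℝ → ℝ)
    (hf : ContinuousOn (fun p : ℝ × ℝ => f p.1 p.2) (Set.Icc t₀ (t₀ + r) ×ˢ Set.univ))
    (hlip : ∀ t ∈ Set.Icc t₀ (t₀ + r), ∀ y₁ y₂ : ℝ,
      |f t y₁ - f t y₂| ≤ L * |y₁ - y₂|) :
    ∃ y₀ : ℝ → ℝ, ContinuousOn y₀ (Set.Icc t₀ (t₀ + r)) ∧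
      ∀ t ∈ Set.Icc t₀ (t₀ + r), y₀ t = ∫ s in t₀..t, f s (y₀ s) := by
  have ht01 : t₀ ≤ t₀ + r := by linarith
  haveI : Nonempty ↥(Set.Icc t₀ (t₀ + r)) := ⟨⟨t₀, by constructor <;> linarith⟩⟩
  set proj : ℝ → ↥(Set.Icc t₀ (t₀ + r)) := Set.projIcc t₀ (t₀ + r) ht01 with hproj
  have hprojmem : ∀ s : ℝ, s ∈ Set.Icc t₀ (t₀ + r) → ((proj s : ℝ)) = s := by
    intro s hs
    rw [hproj, Set.projIcc_of_mem ht01 hs]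
  -- the integrand associated to u
  have hgC : ∀ u : C(↥(Set.Icc t₀ (t₀ + r)), ℝ),
      Continuous (fun s : ℝ => f (proj s) (u (proj s))) := by
    intro u
    have h1 : Continuous fun s : ℝ => (((proj s : ℝ)), u (proj s)) := by
      apply Continuous.prodMk
      · exact continuous_subtype_val.comp continuous_projIcc
      · exact u.continuous.comp continuous_projIcc
    exact hf.comp_continuous h1 (fun s => ⟨(proj s).2, Set.mem_univ _⟩)
  -- the Picard operator
  set F : C(↥(Set.Icc t₀ (t₀ + r)), ℝ) → C(↥(Set.Icc t₀ (t₀ + r)), ℝ) := fun u =>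
    ⟨fun t => ∫ s in t₀..(t : ℝ), f (proj s) (u (proj s)),
      (intervalIntegral.continuous_primitive (fun a b => ((hgC u).intervalIntegrable a b)) t₀).comp
        continuous_subtype_val⟩ with hF
  have hFapp : ∀ u (t : ↥(Set.Icc t₀ (t₀ + r))),
      F u t = ∫ s in t₀..(t : ℝ), f (proj s) (u (proj s)) := fun u t => rfl
  -- iterated estimate
  have key : ∀ n : ℕ, ∀ u v : C(↥(Set.Icc t₀ (t₀ + r)), ℝ), ∀ t : ↥(Set.Icc t₀ (t₀ + r)),
      |F^[n] u t - F^[n] v t| ≤ L ^ n * ((t : ℝ) - t₀) ^ n / (Nat.factorial n) * dist u v := by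
    intro n
    induction n with
    | zero =>
      intro u v t
      have h := ContinuousMap.dist_apply_le_dist (f := u) (g := v) t
      rw [Real.dist_eq] at h
      simpa using h
    | succ n ih =>
      intro u v t
      obtain ⟨ht0, htr⟩ := t.2
      rw [Function.iterate_succ_apply', Function.iterate_succ_apply', hFapp, hFapp,
        ← intervalIntegral.integral_sub (((hgC _).intervalIntegrable _ _))
          (((hgC _).intervalIntegrable _ _))]
      calc |∫ s in t₀..(t : ℝ), (f (proj s) ((F^[n] u) (proj s)) - f (proj s) ((F^[n] v) (proj s)))|
          ≤ ∫ s in t₀..(t : ℝ), |f (proj s) ((F^[n] u) (proj s)) - f (proj s) ((F^[n] v) (proj s))| :=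
            intervalIntegral.abs_integral_le_integral_abs ht0
        _ ≤ ∫ s in t₀..(t : ℝ),
              (L ^ (n + 1) / (Nat.factorial n) * dist u v) * (s - t₀) ^ n := by
            apply intervalIntegral.integral_mono_on ht0
              (((hgC _).sub (hgC _)).abs.intervalIntegrable _ _)
              ((by fun_prop : Continuous fun s : ℝ =>
                (L ^ (n + 1) / (Nat.factorial n) * dist u v) * (s - t₀) ^ n).intervalIntegrable _ _)
            intro s hs
            have hsI : s ∈ Set.Icc t₀ (t₀ + r) := ⟨hs.1, hs.2.trans htr⟩
            have h1 := hlip (proj s) (proj s).2 ((F^[n] u) (proj s)) ((F^[n] v) (proj s))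
            have h2 := ih u v (proj s)
            have h3 : ((proj s : ℝ)) = s := hprojmem s hsI
            rw [h3] at h2
            have h4 : |(F^[n] u) (proj s) - (F^[n] v) (proj s)| ≤
                L ^ n * (s - t₀) ^ n / (Nat.factorial n) * dist u v := h2
            calc |f (proj s) ((F^[n] u) (proj s)) - f (proj s) ((F^[n] v) (proj s))|
                ≤ L * |(F^[n] u) (proj s) - (F^[n] v) (proj s)| := h1
              _ ≤ L * (L ^ n * (s - t₀) ^ n / (Nat.factorial n) * dist u v) :=
                  mul_le_mul_of_nonneg_left h4 hL.le
              _ = (L ^ (n + 1) / (Nat.factorial n) * dist u v) * (s - t₀) ^ n := by ring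
        _ = L ^ (n + 1) * ((t : ℝ) - t₀) ^ (n + 1) / (Nat.factorial (n + 1)) * dist u v := by
            rw [intervalIntegral.integral_const_mul, vHUR_int_pow, Nat.factorial_succ]
            have hn : (0:ℝ) < Nat.factorial n := by exact_mod_cast Nat.factorial_pos n
            push_cast
            field_simp
  -- contraction of an iterate
  have hdist : ∀ n : ℕ, ∀ u v : C(↥(Set.Icc t₀ (t₀ + r)), ℝ),
      dist (F^[n] u) (F^[n] v) ≤ (L * r) ^ n / (Nat.factorial n) * dist u v := by
    intro n u v
    have hC0 : 0 ≤ (L * r) ^ n / (Nat.factorial n) * dist u v := by positivity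
    rw [ContinuousMap.dist_le hC0]
    intro x
    rw [Real.dist_eq]
    refine (key n u v x).trans ?_
    rw [mul_pow]
    gcongr
    · linarith [x.2.1]
    · linarith [x.2.2]
  obtain ⟨n, hn⟩ : ∃ n : ℕ, (L * r) ^ n / (Nat.factorial n) < 1 := by
    have := (FloorSemiring.tendsto_pow_div_factorial_atTop (K := ℝ) (L * r)).eventually
      (gt_mem_nhds one_pos)
    exact this.exists
  have hKnn : 0 ≤ (L * r) ^ n / (Nat.factorial n) := by positivity
  set K : NNReal := ⟨(L * r) ^ n / (Nat.factorial n), hKnn⟩ with hK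
  have hcontr : ContractingWith K (F^[n]) := by
    constructor
    · exact_mod_cast hn
    · apply LipschitzWith.of_dist_le_mul
      intro u v
      exact hdist n u v
  set x : C(↥(Set.Icc t₀ (t₀ + r)), ℝ) := ContractingWith.fixedPoint (F^[n]) hcontr with hx
  have hfix : F x = x := ContractingWith.isFixedPt_fixedPoint_iterate hcontr
  refine ⟨fun t => x (proj t), (x.continuous.comp continuous_projIcc).continuousOn, ?_⟩
  intro t htI
  have h1 : x (proj t) = F x (proj t) := by rw [hfix]
  show x (proj t) = ∫ s in t₀..t, f s (x (proj s))
  rw [h1, hFapp, hprojmem t htI]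
  apply intervalIntegral.integral_congr
  intro s hs
  rw [Set.uIcc_of_le htI.1] at hs
  have hsI : s ∈ Set.Icc t₀ (t₀ + r) := ⟨hs.1, hs.2.trans htI.2⟩
  show f (↑(proj s)) (x (proj s)) = f s (x (proj s))
  rw [hprojmem s hsI]



/-- Hyers–Ulam–Rassias stability of `y(t) = ∫_{t₀}^t f(s, y(s)) ds` on
`I = [t₀, t₀+r]`: if `f` is continuous, `L`-Lipschitz in its second variable,
and `y` is an approximate solution with error bounded by a nondecreasing
positive continuous `φ`, then for every `η > L` there is a unique continuous
exact solution `y₀` with `|y t - y₀ t| ≤ φ t · e^{ηr} / (1 - L/η)` on `I`. -/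
theorem volterra_HUR_stability
    (t₀ r L η : ℝ) (hr : 0 < r) (hL : 0 < L) (hη : L < η)
    (f : ℝ → ℝ → ℝ)
    (hf : ContinuousOn (fun p : ℝ × ℝ => f p.1 p.2) (Set.Icc t₀ (t₀ + r) ×ˢ Set.univ))
    (hlip : ∀ t ∈ Set.Icc t₀ (t₀ + r), ∀ y₁ y₂ : ℝ,
      |f t y₁ - f t y₂| ≤ L * |y₁ - y₂|)
    (φ : ℝ → ℝ) (hφc : ContinuousOn φ (Set.Icc t₀ (t₀ + r)))
    (hφmono : MonotoneOn φ (Set.Icc t₀ (t₀ + r)))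
    (hφpos : ∀ t ∈ Set.Icc t₀ (t₀ + r), 0 < φ t)
    (y : ℝ → ℝ) (hy : ContinuousOn y (Set.Icc t₀ (t₀ + r)))
    (happrox : ∀ t ∈ Set.Icc t₀ (t₀ + r),
      |y t - ∫ s in t₀..t, f s (y s)| ≤ φ t) :
    ∃ y₀ : ℝ → ℝ,
      (ContinuousOn y₀ (Set.Icc t₀ (t₀ + r)) ∧
        (∀ t ∈ Set.Icc t₀ (t₀ + r), y₀ t = ∫ s in t₀..t, f s (y₀ s)) ∧
        (∀ t ∈ Set.Icc t₀ (t₀ + r),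
          |y t - y₀ t| ≤ φ t * Real.exp (η * r) / (1 - L / η))) ∧
      (∀ z : ℝ → ℝ,
        ContinuousOn z (Set.Icc t₀ (t₀ + r)) →
        (∀ t ∈ Set.Icc t₀ (t₀ + r), z t = ∫ s in t₀..t, f s (z s)) →
        (∀ t ∈ Set.Icc t₀ (t₀ + r),
          |y t - z t| ≤ φ t * Real.exp (η * r) / (1 - L / η)) →
        ∀ t ∈ Set.Icc t₀ (t₀ + r), z t = y₀ t) := by
  have ht01 : t₀ ≤ t₀ + r := by linarith
  obtain ⟨y₀, hy₀c, hy₀sol⟩ := vHUR_exists t₀ r L hr hL f hf hlip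
  -- continuity of composed integrands
  have hcomp : ∀ w : ℝ → ℝ, ContinuousOn w (Set.Icc t₀ (t₀ + r)) →
      ContinuousOn (fun s => f s (w s)) (Set.Icc t₀ (t₀ + r)) := by
    intro w hw
    exact hf.comp (continuousOn_id.prodMk hw) (fun s hs => ⟨hs, Set.mem_univ _⟩)
  -- generic estimate for differences of the integral operator
  have hstep : ∀ w₁ w₂ : ℝ → ℝ, ContinuousOn w₁ (Set.Icc t₀ (t₀ + r)) →
      ContinuousOn w₂ (Set.Icc t₀ (t₀ + r)) → ∀ t ∈ Set.Icc t₀ (t₀ + r),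
      |(∫ s in t₀..t, f s (w₁ s)) - ∫ s in t₀..t, f s (w₂ s)| ≤
        L * ∫ s in t₀..t, |w₁ s - w₂ s| := by
    intro w₁ w₂ hw₁ hw₂ t htI
    have hsub : Set.Icc t₀ t ⊆ Set.Icc t₀ (t₀ + r) := Set.Icc_subset_Icc le_rfl htI.2
    have hii : ∀ w : ℝ → ℝ, ContinuousOn w (Set.Icc t₀ (t₀ + r)) →
        IntervalIntegrable w volume t₀ t := by
      intro w hw
      apply ContinuousOn.intervalIntegrable
      rw [Set.uIcc_of_le htI.1]
      exact hw.mono hsub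
    rw [← intervalIntegral.integral_sub (hii _ (hcomp w₁ hw₁)) (hii _ (hcomp w₂ hw₂)),
      ← intervalIntegral.integral_const_mul]
    calc |∫ s in t₀..t, (f s (w₁ s) - f s (w₂ s))|
        ≤ ∫ s in t₀..t, |f s (w₁ s) - f s (w₂ s)| :=
          intervalIntegral.abs_integral_le_integral_abs htI.1
      _ ≤ ∫ s in t₀..t, L * |w₁ s - w₂ s| := by
          apply intervalIntegral.integral_mono_on htI.1
            (hii _ ((hcomp w₁ hw₁).sub (hcomp w₂ hw₂)).abs)
            (hii _ (continuousOn_const.mul (hw₁.sub hw₂).abs))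
          intro s hs
          exact hlip s (hsub hs) _ _
  -- Gronwall inequality for y vs y₀
  have hdineq : ∀ t ∈ Set.Icc t₀ (t₀ + r),
      |y t - y₀ t| ≤ φ t + L * ∫ s in t₀..t, |y s - y₀ s| := by
    intro t htI
    have e1 : y t - y₀ t = (y t - ∫ s in t₀..t, f s (y s)) +
        ((∫ s in t₀..t, f s (y s)) - ∫ s in t₀..t, f s (y₀ s)) := by
      rw [← hy₀sol t htI]; ring
    rw [e1]
    exact (abs_add_le _ _).trans (add_le_add (happrox t htI) (hstep y y₀ hy hy₀c t htI))
  have hgron := vHUR_gronwall t₀ r L hr hL.le φ (fun t => |y t - y₀ t|) hφmono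
    (fun t ht => (hφpos t ht).le) ((hy.sub hy₀c).abs) (fun t _ => abs_nonneg _) hdineq
  -- comparing the exponential bounds
  have hη0 : 0 < η := hL.trans hη
  have h1 : 0 < 1 - L / η := by
    rw [sub_pos, div_lt_one hη0]; exact hη
  have hexple : ∀ t ∈ Set.Icc t₀ (t₀ + r),
      φ t * Real.exp (L * r) ≤ φ t * Real.exp (η * r) / (1 - L / η) := by
    intro t htI
    rw [le_div_iff₀ h1]
    have h2 : Real.exp (L * r) ≤ Real.exp (η * r) :=
      Real.exp_le_exp.2 (by nlinarith)
    have h3 : 1 - L / η ≤ 1 := by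
      have : 0 ≤ L / η := div_nonneg hL.le hη0.le
      linarith
    have h4 := (hφpos t htI).le
    nlinarith [Real.exp_pos (L * r), mul_le_mul_of_nonneg_left h2 h4,
      mul_nonneg h4 (Real.exp_pos (L * r)).le]
  refine ⟨y₀, ⟨hy₀c, hy₀sol, fun t htI => (hgron t htI).trans (hexple t htI)⟩, ?_⟩
  -- uniqueness
  intro z hzc hzsol _ t htI
  have hdz : ∀ t ∈ Set.Icc t₀ (t₀ + r),
      |z t - y₀ t| ≤ (fun _ : ℝ => (0:ℝ)) t + L * ∫ s in t₀..t, |z s - y₀ s| := by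
    intro t htI
    have e1 : z t - y₀ t = (∫ s in t₀..t, f s (z s)) - ∫ s in t₀..t, f s (y₀ s) := by
      rw [← hzsol t htI, ← hy₀sol t htI]
    rw [e1]
    simpa using hstep z y₀ hzc hy₀c t htI
  have := vHUR_gronwall t₀ r L hr hL.le (fun _ => (0:ℝ)) (fun t => |z t - y₀ t|)
    (monotoneOn_const) (fun _ _ => le_rfl) ((hzc.sub hy₀c).abs) (fun t _ => abs_nonneg _)
    hdz t htI
  have h0 : |z t - y₀ t| ≤ 0 := by simpa using this
  have := abs_nonpos_iff.mp h0
  linarith [sub_eq_zero.mp this |> fun h => h ▸ (le_refl (z t))]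
end

section
/- Let $I=[t_0,t_0+r]$ and let $f:I\times I\times\mathbb{R}\to\mathbb{R}$ be continuous and satisfy $|f(t,s,z_1)-f(t,s,z_2)|\le L|z_1-z_2|$ for all $t,s\in I$, $z_1,z_2\in\mathbb{R}$, with $L>0$. Let $\varphi:I\to(0,\infty)$ be nondecreasing continuous and let $y:I\to\mathbb{R}$ be continuous with $|y(t)-\int_{t_0}^{t} f(t,s,y(s))\,ds|\le\varphi(t)$ for all $t\in I$. Then for every fixed $\eta>L$ there exists a unique continuous $y_0:I\to\mathbb{R}$ with $y_0(t)=\int_{t_0}^{t} f(t,s,y_0(s))\,ds$ and $|y(t)-y_0(t)|\le \frac{\varphi(t)\,e^{\eta r}}{1-L/\eta}$ for all $t\in I$. -/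
lemma vk_int_exp (t₀ η : ℝ) (hη : 0 < η) (t : ℝ) :
    ∫ s in t₀..t, Real.exp (η * (s - t₀)) = (Real.exp (η * (t - t₀)) - 1) / η := by
  have h : ∀ x ∈ Set.uIcc t₀ t, HasDerivAt (fun s => Real.exp (η * (s - t₀)) / η)
      (Real.exp (η * (x - t₀))) x := by
    intro x _
    have h1 : HasDerivAt (fun s : ℝ => η * (s - t₀)) η x := by
      simpa using ((hasDerivAt_id x).sub_const t₀).const_mul η
    have h2 := h1.exp.div_const η
    simpa [mul_comm, mul_div_assoc, mul_div_cancel_left₀ _ (ne_of_gt hη)] using h2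
  rw [intervalIntegral.integral_eq_sub_of_hasDerivAt h
    ((Real.continuous_exp.comp (by continuity)).intervalIntegrable _ _)]
  simp [sub_div]

lemma vk_gronwall (t₀ r L η : ℝ) (hr : 0 < r) (hL : 0 < L) (hη : L < η)
    (ψ d : ℝ → ℝ)
    (hψc : ContinuousOn ψ (Set.Icc t₀ (t₀ + r)))
    (hψm : MonotoneOn ψ (Set.Icc t₀ (t₀ + r)))
    (hψpos : ∀ t ∈ Set.Icc t₀ (t₀ + r), 0 < ψ t)
    (hdc : ContinuousOn d (Set.Icc t₀ (t₀ + r)))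
    (hd0 : ∀ t ∈ Set.Icc t₀ (t₀ + r), 0 ≤ d t)
    (hint : ∀ t ∈ Set.Icc t₀ (t₀ + r), d t ≤ ψ t + L * ∫ s in t₀..t, d s) :
    ∀ t ∈ Set.Icc t₀ (t₀ + r), d t ≤ ψ t * Real.exp (η * (t - t₀)) / (1 - L / η) := by
  have hη0 : 0 < η := hL.trans hη
  have hLη : L / η < 1 := (div_lt_one hη0).2 hη
  have hden : 0 < 1 - L / η := by linarith
  have hle : t₀ ≤ t₀ + r := by linarith
  have hKne : (Set.Icc t₀ (t₀ + r)).Nonempty := Set.nonempty_Icc.2 hle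
  have hwpos : ∀ t ∈ Set.Icc t₀ (t₀ + r), 0 < ψ t * Real.exp (η * (t - t₀)) :=
    fun t ht => mul_pos (hψpos t ht) (Real.exp_pos _)
  have hwc : ContinuousOn (fun t => ψ t * Real.exp (η * (t - t₀))) (Set.Icc t₀ (t₀ + r)) :=
    hψc.mul (Continuous.continuousOn (by continuity))
  have hhc : ContinuousOn (fun t => d t / (ψ t * Real.exp (η * (t - t₀)))) (Set.Icc t₀ (t₀ + r)) :=
    hdc.div hwc (fun t ht => (hwpos t ht).ne')
  obtain ⟨x, hxK, hmax⟩ := isCompact_Icc.exists_isMaxOn hKne hhc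
  obtain ⟨M, hM⟩ : ∃ M : ℝ, M = d x / (ψ x * Real.exp (η * (x - t₀))) := ⟨_, rfl⟩
  have hM0 : 0 ≤ M := hM ▸ div_nonneg (hd0 x hxK) (hwpos x hxK).le
  have key : ∀ t ∈ Set.Icc t₀ (t₀ + r), d t ≤ M * (ψ t * Real.exp (η * (t - t₀))) := by
    intro t ht
    have h1 : d t / (ψ t * Real.exp (η * (t - t₀))) ≤ M := hM ▸ hmax ht
    exact (div_le_iff₀ (hwpos t ht)).1 h1
  have hxint : IntervalIntegrable d MeasureTheory.volume t₀ x := by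
    apply ContinuousOn.intervalIntegrable
    apply hdc.mono
    rw [Set.uIcc_of_le hxK.1]
    exact Set.Icc_subset_Icc le_rfl hxK.2
  have h1 : ∫ s in t₀..x, d s ≤ ∫ s in t₀..x, M * ψ x * Real.exp (η * (s - t₀)) := by
    apply intervalIntegral.integral_mono_on hxK.1 hxint
      ((by continuity : Continuous fun s => M * ψ x * Real.exp (η * (s - t₀))).intervalIntegrable _ _)
    intro s hs
    have hsK : s ∈ Set.Icc t₀ (t₀ + r) := ⟨hs.1, hs.2.trans hxK.2⟩
    have h3 : ψ s ≤ ψ x := hψm hsK hxK hs.2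
    have h4 := (Real.exp_pos (η * (s - t₀))).le
    calc d s ≤ M * (ψ s * Real.exp (η * (s - t₀))) := key s hsK
    _ ≤ M * (ψ x * Real.exp (η * (s - t₀))) :=
        mul_le_mul_of_nonneg_left (mul_le_mul_of_nonneg_right h3 h4) hM0
    _ = M * ψ x * Real.exp (η * (s - t₀)) := by ring
  have h2 : ∫ s in t₀..x, M * ψ x * Real.exp (η * (s - t₀))
      = M * ψ x * ((Real.exp (η * (x - t₀)) - 1) / η) := by
    rw [intervalIntegral.integral_const_mul, vk_int_exp t₀ η hη0 x]
  have h12 : ∫ s in t₀..x, d s ≤ M * ψ x * ((Real.exp (η * (x - t₀)) - 1) / η) :=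
    h1.trans_eq h2
  obtain ⟨E, hE⟩ : ∃ E : ℝ, E = Real.exp (η * (x - t₀)) := ⟨_, rfl⟩
  rw [← hE] at h12 hM
  have hE1 : 1 ≤ E := by rw [hE]; exact Real.one_le_exp (by nlinarith [hxK.1])
  have hψx : 0 < ψ x := hψpos x hxK
  have hdx : M * (ψ x * E) = d x := by rw [hM, hE]; exact div_mul_cancel₀ _ (hwpos x hxK).ne'
  have h4 : M * (ψ x * E) ≤ ψ x + L * (M * ψ x * ((E - 1) / η)) := by
    rw [hdx]
    have := hint x hxK
    nlinarith [h12]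
  have h6 : M * E * η ≤ η + L * (M * (E - 1)) := by
    have h5' : (M * E * η) * ψ x ≤ (η + L * (M * (E - 1))) * ψ x := by
      have h5 := mul_le_mul_of_nonneg_right h4 hη0.le
      have hre : (ψ x + L * (M * ψ x * ((E - 1) / η))) * η
          = (η + L * (M * (E - 1))) * ψ x := by field_simp
      calc (M * E * η) * ψ x = M * (ψ x * E) * η := by ring
      _ ≤ (ψ x + L * (M * ψ x * ((E - 1) / η))) * η := h5
      _ = (η + L * (M * (E - 1))) * ψ x := hre
    exact le_of_mul_le_mul_right h5' hψx
  have hMfin : M * (η - L) ≤ η := by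
    have P1 : 0 ≤ M * (η - L) * (E - 1) :=
      mul_nonneg (mul_nonneg hM0 (by linarith)) (by linarith)
    have P2 : 0 ≤ L * M := mul_nonneg hL.le hM0
    linarith [h6, P1, P2]
  have hMle : M ≤ 1 / (1 - L / η) := by
    rw [le_div_iff₀ hden]
    have hq : M * (1 - L / η) = M * (η - L) / η := by field_simp
    rw [hq, div_le_one hη0]
    linarith
  intro t ht
  calc d t ≤ M * (ψ t * Real.exp (η * (t - t₀))) := key t ht
  _ ≤ (1 / (1 - L / η)) * (ψ t * Real.exp (η * (t - t₀))) :=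
      mul_le_mul_of_nonneg_right hMle (hwpos t ht).le
  _ = ψ t * Real.exp (η * (t - t₀)) / (1 - L / η) := by ring

/-- Hyers–Ulam–Rassias stability of `y(t) = ∫_{t₀}^t f(t, s, y(s)) ds` on
`I = [t₀, t₀+r]` for a kernel depending on both variables. -/
theorem volterra_kernel_HUR_stability
    (t₀ r L η : ℝ) (hr : 0 < r) (hL : 0 < L) (hη : L < η)
    (f : ℝ → ℝ → ℝ → ℝ)
    (hf : ContinuousOn (fun p : ℝ × ℝ × ℝ => f p.1 p.2.1 p.2.2)
      (Set.Icc t₀ (t₀ + r) ×ˢ Set.Icc t₀ (t₀ + r) ×ˢ Set.univ))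
    (hlip : ∀ t ∈ Set.Icc t₀ (t₀ + r), ∀ s ∈ Set.Icc t₀ (t₀ + r), ∀ z₁ z₂ : ℝ,
      |f t s z₁ - f t s z₂| ≤ L * |z₁ - z₂|)
    (φ : ℝ → ℝ) (hφc : ContinuousOn φ (Set.Icc t₀ (t₀ + r)))
    (hφmono : MonotoneOn φ (Set.Icc t₀ (t₀ + r)))
    (hφpos : ∀ t ∈ Set.Icc t₀ (t₀ + r), 0 < φ t)
    (y : ℝ → ℝ) (hy : ContinuousOn y (Set.Icc t₀ (t₀ + r)))
    (happrox : ∀ t ∈ Set.Icc t₀ (t₀ + r),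
      |y t - ∫ s in t₀..t, f t s (y s)| ≤ φ t) :
    ∃ y₀ : ℝ → ℝ,
      (ContinuousOn y₀ (Set.Icc t₀ (t₀ + r)) ∧
        (∀ t ∈ Set.Icc t₀ (t₀ + r), y₀ t = ∫ s in t₀..t, f t s (y₀ s)) ∧
        (∀ t ∈ Set.Icc t₀ (t₀ + r),
          |y t - y₀ t| ≤ φ t * Real.exp (η * r) / (1 - L / η))) ∧
      (∀ z : ℝ → ℝ,
        ContinuousOn z (Set.Icc t₀ (t₀ + r)) →
        (∀ t ∈ Set.Icc t₀ (t₀ + r), z t = ∫ s in t₀..t, f t s (z s)) →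
        (∀ t ∈ Set.Icc t₀ (t₀ + r),
          |y t - z t| ≤ φ t * Real.exp (η * r) / (1 - L / η)) →
        ∀ t ∈ Set.Icc t₀ (t₀ + r), z t = y₀ t) := by
  have hη0 : 0 < η := hL.trans hη
  have hden : 0 < 1 - L / η := by
    have : L / η < 1 := (div_lt_one hη0).2 hη
    linarith
  have hle : t₀ ≤ t₀ + r := by linarith
  set π : ℝ → Set.Icc t₀ (t₀ + r) := Set.projIcc t₀ (t₀ + r) hle with hπdef
  have hπ : Continuous π := continuous_projIcc
  set g : ℝ → ℝ → ℝ → ℝ := fun t s z => f (π t) (π s) z with hgdef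
  have hgc : Continuous (fun p : ℝ × ℝ × ℝ => g p.1 p.2.1 p.2.2) := by
    have hmap : Continuous (fun p : ℝ × ℝ × ℝ =>
        (((π p.1 : ℝ), ((π p.2.1 : ℝ), p.2.2)) : ℝ × ℝ × ℝ)) := by fun_prop
    exact hf.comp_continuous hmap (fun p => ⟨(π p.1).2, (π p.2.1).2, Set.mem_univ _⟩)
  have hglip : ∀ (t s z₁ z₂ : ℝ), |g t s z₁ - g t s z₂| ≤ L * |z₁ - z₂| :=
    fun t s z₁ z₂ => hlip _ (π t).2 _ (π s).2 z₁ z₂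
  have hπeq : ∀ t ∈ Set.Icc t₀ (t₀ + r), (π t : ℝ) = t := by
    intro t ht; rw [hπdef, Set.projIcc_of_mem hle ht]
  have hgeq : ∀ t ∈ Set.Icc t₀ (t₀ + r), ∀ s ∈ Set.Icc t₀ (t₀ + r), ∀ z : ℝ,
      g t s z = f t s z := by
    intro t ht s hs z
    rw [hgdef]
    simp only
    rw [hπeq t ht, hπeq s hs]
  -- continuity of substituted integrands
  have hcg : ∀ (t : ℝ) (c : ℝ → ℝ), Continuous c → Continuous (fun s => g t s (c s)) :=
    fun t c hc => hgc.comp (continuous_const.prodMk (continuous_id.prodMk hc))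
  -- generic difference bound
  have diffbound : ∀ (a b : ℝ → ℝ), Continuous a → Continuous b → ∀ t : ℝ, t₀ ≤ t →
      |(∫ s in t₀..t, g t s (a s)) - ∫ s in t₀..t, g t s (b s)|
        ≤ L * ∫ s in t₀..t, |a s - b s| := by
    intro a b ha hb t ht
    rw [← intervalIntegral.integral_sub ((hcg t a ha).intervalIntegrable _ _)
      ((hcg t b hb).intervalIntegrable _ _)]
    refine (intervalIntegral.abs_integral_le_integral_abs ht).trans ?_
    rw [← intervalIntegral.integral_const_mul]
    apply intervalIntegral.integral_mono_on ht
      (((hcg t a ha).sub (hcg t b hb)).abs.intervalIntegrable _ _)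
      ((continuous_const.mul (ha.sub hb).abs).intervalIntegrable _ _)
    intro s _
    exact hglip t s (a s) (b s)
  -- the Bielecki-weighted Picard operator on C(Icc, ℝ)
  have hYc : ∀ u : C(Set.Icc t₀ (t₀ + r), ℝ),
      Continuous (fun s : ℝ => Real.exp (η * (s - t₀)) * u (π s)) := by
    intro u
    exact (Real.continuous_exp.comp (by fun_prop)).mul (u.continuous.comp hπ)
  have hTc : ∀ u : C(Set.Icc t₀ (t₀ + r), ℝ),
      Continuous (fun t : Set.Icc t₀ (t₀ + r) => Real.exp (-(η * ((t : ℝ) - t₀))) *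
        ∫ s in t₀..(t : ℝ), g t s (Real.exp (η * (s - t₀)) * u (π s))) := by
    intro u
    have hF : Continuous (fun x : ℝ =>
        ∫ s in t₀..x, g x s (Real.exp (η * (s - t₀)) * u (π s))) := by
      apply intervalIntegral.continuous_parametric_intervalIntegral_of_continuous _ continuous_id
      have hm : Continuous (fun p : ℝ × ℝ =>
          ((p.1, p.2, Real.exp (η * (p.2 - t₀)) * u (π p.2)) : ℝ × ℝ × ℝ)) :=
        continuous_fst.prodMk (continuous_snd.prodMk ((hYc u).comp continuous_snd))
      show Continuous ((fun p : ℝ × ℝ × ℝ => g p.1 p.2.1 p.2.2) ∘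
        (fun p : ℝ × ℝ => (p.1, p.2, Real.exp (η * (p.2 - t₀)) * u (π p.2))))
      exact hgc.comp hm
    exact ((Real.continuous_exp.comp (by fun_prop)).mul (hF.comp continuous_subtype_val))
  set T : C(Set.Icc t₀ (t₀ + r), ℝ) → C(Set.Icc t₀ (t₀ + r), ℝ) := fun u =>
    ⟨fun t => Real.exp (-(η * ((t : ℝ) - t₀))) *
        ∫ s in t₀..(t : ℝ), g t s (Real.exp (η * (s - t₀)) * u (π s)), hTc u⟩ with hTdef
  have hκ : (0 : ℝ) ≤ L / η := le_of_lt (div_pos hL hη0)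
  have hcontr : ContractingWith ⟨L / η, hκ⟩ T := by
    constructor
    · apply NNReal.coe_lt_coe.1
      exact (div_lt_one hη0).2 hη
    · apply LipschitzWith.of_dist_le_mul
      intro u v
      have hd0 : (0 : ℝ) ≤ L / η * dist u v := mul_nonneg hκ dist_nonneg
      show dist (T u) (T v) ≤ L / η * dist u v
      rw [ContinuousMap.dist_le hd0]
      intro x
      have hx1 : t₀ ≤ (x : ℝ) := x.2.1
      have key : ∀ s ∈ Set.Icc t₀ (x : ℝ),
          |Real.exp (η * (s - t₀)) * u (π s) - Real.exp (η * (s - t₀)) * v (π s)|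
            ≤ Real.exp (η * (s - t₀)) * dist u v := by
        intro s _
        have h1 : dist (u (π s)) (v (π s)) ≤ dist u v := ContinuousMap.dist_apply_le_dist _
        rw [← mul_sub, abs_mul, abs_of_pos (Real.exp_pos _)]
        exact mul_le_mul_of_nonneg_left (by rwa [Real.dist_eq] at h1) (Real.exp_pos _).le
      have h2 : |(∫ s in t₀..(x : ℝ), g x s (Real.exp (η * (s - t₀)) * u (π s))) -
          ∫ s in t₀..(x : ℝ), g x s (Real.exp (η * (s - t₀)) * v (π s))|
            ≤ L * ∫ s in t₀..(x : ℝ),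
              |Real.exp (η * (s - t₀)) * u (π s) - Real.exp (η * (s - t₀)) * v (π s)| :=
        diffbound _ _ (hYc u) (hYc v) _ hx1
      have h3 : (∫ s in t₀..(x : ℝ),
            |Real.exp (η * (s - t₀)) * u (π s) - Real.exp (η * (s - t₀)) * v (π s)|)
          ≤ ∫ s in t₀..(x : ℝ), Real.exp (η * (s - t₀)) * dist u v := by
        apply intervalIntegral.integral_mono_on hx1
          (((hYc u).sub (hYc v)).abs.intervalIntegrable _ _)
          ((Real.continuous_exp.comp (by fun_prop) |>.mul continuous_const).intervalIntegrable _ _)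
        exact key
      have h4 : (∫ s in t₀..(x : ℝ), Real.exp (η * (s - t₀)) * dist u v)
          = (Real.exp (η * ((x : ℝ) - t₀)) - 1) / η * dist u v := by
        rw [intervalIntegral.integral_mul_const, vk_int_exp t₀ η hη0]
      rw [Real.dist_eq]
      have hTux : ∀ w : C(Set.Icc t₀ (t₀ + r), ℝ), T w x = Real.exp (-(η * ((x : ℝ) - t₀))) *
          ∫ s in t₀..(x : ℝ), g x s (Real.exp (η * (s - t₀)) * w (π s)) := fun w => rfl
      rw [hTux u, hTux v, ← mul_sub, abs_mul, abs_of_pos (Real.exp_pos _)]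
      have hE : 0 < Real.exp (η * ((x : ℝ) - t₀)) := Real.exp_pos _
      have hEneg : Real.exp (-(η * ((x : ℝ) - t₀))) = (Real.exp (η * ((x : ℝ) - t₀)))⁻¹ :=
        Real.exp_neg _
      have hfinal : Real.exp (-(η * ((x : ℝ) - t₀))) *
          (L * ((Real.exp (η * ((x : ℝ) - t₀)) - 1) / η * dist u v)) ≤ L / η * dist u v := by
        have hd : (0 : ℝ) ≤ dist u v := dist_nonneg
        rw [hEneg, inv_mul_le_iff₀ hE]
        calc L * ((Real.exp (η * ((x:ℝ) - t₀)) - 1) / η * dist u v)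
            ≤ L * (Real.exp (η * ((x:ℝ) - t₀)) / η * dist u v) := by gcongr; linarith
        _ = Real.exp (η * ((x:ℝ) - t₀)) * (L / η * dist u v) := by ring
      calc Real.exp (-(η * ((x : ℝ) - t₀))) *
            |(∫ s in t₀..(x : ℝ), g x s (Real.exp (η * (s - t₀)) * u (π s))) -
              ∫ s in t₀..(x : ℝ), g x s (Real.exp (η * (s - t₀)) * v (π s))|
          ≤ Real.exp (-(η * ((x : ℝ) - t₀))) *
            (L * ((Real.exp (η * ((x : ℝ) - t₀)) - 1) / η * dist u v)) := by
            apply mul_le_mul_of_nonneg_left _ (Real.exp_pos _).le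
            refine h2.trans ?_
            rw [← h4]
            exact mul_le_mul_of_nonneg_left h3 hL.le
      _ ≤ L / η * dist u v := hfinal
  -- the fixed point
  set u₀ : C(Set.Icc t₀ (t₀ + r), ℝ) := ContractingWith.fixedPoint T hcontr with hu₀def
  have hu₀fix : T u₀ = u₀ := hcontr.fixedPoint_isFixedPt
  set y₀ : ℝ → ℝ := fun s => Real.exp (η * (s - t₀)) * u₀ (π s) with hy₀def
  have hy₀c : Continuous y₀ := hYc u₀
  have hfixg : ∀ t ∈ Set.Icc t₀ (t₀ + r), y₀ t = ∫ s in t₀..t, g t s (y₀ s) := by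
    intro t ht
    have h1 : (T u₀) (π t) = u₀ (π t) := by rw [hu₀fix]
    have h2 : (T u₀) (π t) = Real.exp (-(η * ((π t : ℝ) - t₀))) *
        ∫ s in t₀..((π t : ℝ)), g (π t : ℝ) s (Real.exp (η * (s - t₀)) * u₀ (π s)) := rfl
    rw [h2, hπeq t ht] at h1
    show Real.exp (η * (t - t₀)) * u₀ (π t) = ∫ s in t₀..t, g t s (y₀ s)
    rw [← h1, ← mul_assoc, ← Real.exp_add,
      (by ring : η * (t - t₀) + -(η * (t - t₀)) = 0), Real.exp_zero, one_mul]
  have hfixf : ∀ t ∈ Set.Icc t₀ (t₀ + r), y₀ t = ∫ s in t₀..t, f t s (y₀ s) := by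
    intro t ht
    rw [hfixg t ht]
    apply intervalIntegral.integral_congr
    intro s hs
    have hsK : s ∈ Set.Icc t₀ (t₀ + r) := by
      rw [Set.uIcc_of_le ht.1] at hs; exact ⟨hs.1, hs.2.trans ht.2⟩
    exact hgeq t ht s hsK _
  -- key estimate for arbitrary comparison functions
  have key_est : ∀ (w : ℝ → ℝ), ContinuousOn w (Set.Icc t₀ (t₀ + r)) →
      ∀ t ∈ Set.Icc t₀ (t₀ + r),
      |(∫ s in t₀..t, f t s (w s)) - y₀ t| ≤ L * ∫ s in t₀..t, |w s - y₀ s| := by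
    intro w hw t ht
    have hwc : Continuous (fun s : ℝ => w ((π s : ℝ))) :=
      hw.comp_continuous (continuous_subtype_val.comp hπ) (fun s => (π s).2)
    have hsub : ∀ s ∈ Set.uIcc t₀ t, s ∈ Set.Icc t₀ (t₀ + r) := by
      intro s hs
      rw [Set.uIcc_of_le ht.1] at hs
      exact ⟨hs.1, hs.2.trans ht.2⟩
    have e1 : (∫ s in t₀..t, f t s (w s)) = ∫ s in t₀..t, g t s (w ((π s : ℝ))) := by
      apply intervalIntegral.integral_congr
      intro s hs
      have hsK := hsub s hs
      simp only
      rw [hπeq s hsK, hgeq t ht s hsK]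
    have e2 : (∫ s in t₀..t, |w ((π s : ℝ)) - y₀ s|) = ∫ s in t₀..t, |w s - y₀ s| := by
      apply intervalIntegral.integral_congr
      intro s hs
      simp only
      rw [hπeq s (hsub s hs)]
    rw [e1, ← e2, hfixg t ht]
    exact diffbound _ _ hwc hy₀c t ht.1
  -- stability bound via Gronwall
  have hd_stab : ∀ t ∈ Set.Icc t₀ (t₀ + r),
      |y t - y₀ t| ≤ φ t + L * ∫ s in t₀..t, |y s - y₀ s| := by
    intro t ht
    have h1 := happrox t ht
    have h2 := key_est y hy t ht
    calc |y t - y₀ t|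
        = |(y t - ∫ s in t₀..t, f t s (y s)) + ((∫ s in t₀..t, f t s (y s)) - y₀ t)| := by
          rw [sub_add_sub_cancel]
    _ ≤ |y t - ∫ s in t₀..t, f t s (y s)| + |(∫ s in t₀..t, f t s (y s)) - y₀ t| := abs_add_le _ _
    _ ≤ φ t + L * ∫ s in t₀..t, |y s - y₀ s| := add_le_add h1 h2
  have hstab := vk_gronwall t₀ r L η hr hL hη φ (fun t => |y t - y₀ t|) hφc hφmono hφpos
    ((hy.sub hy₀c.continuousOn).abs) (fun t _ => abs_nonneg _) hd_stab
  have hbound : ∀ t ∈ Set.Icc t₀ (t₀ + r),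
      |y t - y₀ t| ≤ φ t * Real.exp (η * r) / (1 - L / η) := by
    intro t ht
    refine (hstab t ht).trans ?_
    have h1 : Real.exp (η * (t - t₀)) ≤ Real.exp (η * r) := by
      apply Real.exp_le_exp.2
      have := ht.2
      nlinarith
    have h2 : (0 : ℝ) ≤ φ t := (hφpos t ht).le
    gcongr
  refine ⟨y₀, ⟨hy₀c.continuousOn, hfixf, hbound⟩, ?_⟩
  -- uniqueness
  intro z hzc hzfix _ t ht
  have hzd : ∀ t' ∈ Set.Icc t₀ (t₀ + r),
      |z t' - y₀ t'| ≤ L * ∫ s in t₀..t', |z s - y₀ s| := by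
    intro t' ht'
    have h2 := key_est z hzc t' ht'
    rwa [← hzfix t' ht'] at h2
  have hec : ContinuousOn (fun t => |z t - y₀ t|) (Set.Icc t₀ (t₀ + r)) :=
    (hzc.sub hy₀c.continuousOn).abs
  have hεb : ∀ ε : ℝ, 0 < ε →
      |z t - y₀ t| ≤ ε * Real.exp (η * (t - t₀)) / (1 - L / η) := by
    intro ε hε
    have hmono : MonotoneOn (fun _ : ℝ => ε) (Set.Icc t₀ (t₀ + r)) := monotoneOn_const
    have := vk_gronwall t₀ r L η hr hL hη (fun _ => ε) (fun t => |z t - y₀ t|)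
      continuousOn_const hmono (fun _ _ => hε) hec (fun t _ => abs_nonneg _)
      (fun t' ht' => by
        have h1 := hzd t' ht'
        linarith)
    exact this t ht
  have hz0 : |z t - y₀ t| ≤ 0 := by
    by_contra hcon
    push_neg at hcon
    set C := Real.exp (η * (t - t₀)) / (1 - L / η) with hC
    have hC0 : 0 < C := by positivity
    have h5 := hεb (|z t - y₀ t| / (2 * C)) (by positivity)
    have h6 : |z t - y₀ t| / (2 * C) * Real.exp (η * (t - t₀)) / (1 - L / η)
        = |z t - y₀ t| / 2 := by
      rw [mul_div_assoc, ← hC]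
      field_simp
    rw [h6] at h5
    linarith
  have h7 : z t - y₀ t = 0 := abs_eq_zero.1 (le_antisymm hz0 (abs_nonneg _))
  linarith [h7]
end

section
/- Let $I=[t_0,t_0+r]$, let $f:I\times I\times\mathbb{R}\to\mathbb{R}$ be continuous with $|f(t,s,z_1)-f(t,s,z_2)|\le L|z_1-z_2|$ for all $t,s\in I$, $z_1,z_2\in\mathbb{R}$, $L>0$, and let $\varepsilon>0$. If a continuous $y:I\to\mathbb{R}$ satisfies $|y(t)-\int_{t_0}^{t} f(t,s,y(s))\,ds|\le\varepsilon$ on $I$, then for every $\eta>L$ there is a unique continuous solution $y_0$ of $y_0(t)=\int_{t_0}^{t} f(t,s,y_0(s))\,ds$ with $|y(t)-y_0(t)|\le \frac{\varepsilon\, e^{\eta r}}{1-L/\eta}$ on $I$. -/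
open Set MeasureTheory intervalIntegral

/-- Hyers–Ulam stability of `y(t) = ∫_{t₀}^t f(t, s, y(s)) ds` on a finite
closed interval, with no restriction `Lr < 1`. -/
theorem volterra_kernel_HU_stability
    (t₀ r L η ε : ℝ) (hr : 0 < r) (hL : 0 < L) (hη : L < η) (hε : 0 < ε)
    (f : ℝ → ℝ → ℝ → ℝ)
    (hf : ContinuousOn (fun p : ℝ × ℝ × ℝ => f p.1 p.2.1 p.2.2)
      (Set.Icc t₀ (t₀ + r) ×ˢ Set.Icc t₀ (t₀ + r) ×ˢ Set.univ))
    (hlip : ∀ t ∈ Set.Icc t₀ (t₀ + r), ∀ s ∈ Set.Icc t₀ (t₀ + r), ∀ z₁ z₂ : ℝ,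
      |f t s z₁ - f t s z₂| ≤ L * |z₁ - z₂|)
    (y : ℝ → ℝ) (hy : ContinuousOn y (Set.Icc t₀ (t₀ + r)))
    (happrox : ∀ t ∈ Set.Icc t₀ (t₀ + r),
      |y t - ∫ s in t₀..t, f t s (y s)| ≤ ε) :
    ∃ y₀ : ℝ → ℝ,
      (ContinuousOn y₀ (Set.Icc t₀ (t₀ + r)) ∧
        (∀ t ∈ Set.Icc t₀ (t₀ + r), y₀ t = ∫ s in t₀..t, f t s (y₀ s)) ∧
        (∀ t ∈ Set.Icc t₀ (t₀ + r),
          |y t - y₀ t| ≤ ε * Real.exp (η * r) / (1 - L / η))) ∧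
      (∀ z : ℝ → ℝ,
        ContinuousOn z (Set.Icc t₀ (t₀ + r)) →
        (∀ t ∈ Set.Icc t₀ (t₀ + r), z t = ∫ s in t₀..t, f t s (z s)) →
        (∀ t ∈ Set.Icc t₀ (t₀ + r),
          |y t - z t| ≤ ε * Real.exp (η * r) / (1 - L / η)) →
        ∀ t ∈ Set.Icc t₀ (t₀ + r), z t = y₀ t) := by
  have hle : t₀ ≤ t₀ + r := by linarith
  have hη0 : (0:ℝ) < η := hL.trans hη
  set π : ℝ → ↥(Set.Icc t₀ (t₀ + r)) := Set.projIcc t₀ (t₀ + r) hle with hπ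
  have hπcont : Continuous π := continuous_projIcc
  have hπcoe : ∀ s ∈ Set.Icc t₀ (t₀ + r), ((π s : ℝ)) = s := fun s hs => by
    rw [hπ, Set.projIcc_of_mem hle hs]
  -- the conjugated integrand
  set G : C(↥(Set.Icc t₀ (t₀ + r)), ℝ) → ↥(Set.Icc t₀ (t₀ + r)) → ℝ → ℝ :=
    fun h t s => f (↑t) (↑(π s)) (Real.exp (η * ((↑(π s) : ℝ) - t₀)) * h (π s)) with hG
  have hGcont : ∀ h : C(↥(Set.Icc t₀ (t₀ + r)), ℝ),
      Continuous (Function.uncurry (G h)) := by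
    intro h
    have hm : Continuous (fun p : ↥(Set.Icc t₀ (t₀ + r)) × ℝ =>
        ((↑p.1 : ℝ), ((↑(π p.2) : ℝ), Real.exp (η * ((↑(π p.2) : ℝ) - t₀)) * h (π p.2)))) := by
      fun_prop
    exact hf.comp_continuous hm (fun p => ⟨p.1.2, (π p.2).2, trivial⟩)
  -- the conjugated Volterra operator
  set S : C(↥(Set.Icc t₀ (t₀ + r)), ℝ) → C(↥(Set.Icc t₀ (t₀ + r)), ℝ) :=
    fun h => ⟨fun t => Real.exp (-(η * ((↑t : ℝ) - t₀))) * ∫ s in t₀..(↑t : ℝ), G h t s, by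
      apply Continuous.mul
      · fun_prop
      · exact continuous_parametric_intervalIntegral_of_continuous (hGcont h)
          continuous_subtype_val⟩ with hS
  -- integrand rewriting
  have hkey : ∀ (h : C(↥(Set.Icc t₀ (t₀ + r)), ℝ)) (w : ℝ → ℝ) (t : ↥(Set.Icc t₀ (t₀ + r))),
      (∀ s ∈ Set.Icc t₀ (↑t : ℝ), Real.exp (η * (s - t₀)) * h (π s) = w s) →
      (∫ s in t₀..(↑t : ℝ), G h t s) = ∫ s in t₀..(↑t : ℝ), f (↑t) s (w s) := by
    intro h w t hw
    apply intervalIntegral.integral_congr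
    intro s hs
    rw [Set.uIcc_of_le t.2.1] at hs
    have hsI : s ∈ Set.Icc t₀ (t₀ + r) := ⟨hs.1, hs.2.trans t.2.2⟩
    have hc : ((π s : ℝ)) = s := hπcoe s hsI
    rw [hG]
    simp only [hc]
    rw [hw s hs]
  -- the exponential integral
  have hexpint : ∀ b, t₀ ≤ b →
      (∫ s in t₀..b, Real.exp (η * (s - t₀))) = (Real.exp (η * (b - t₀)) - 1) / η := by
    intro b hb
    have hd : ∀ x ∈ Set.uIcc t₀ b, HasDerivAt
        (fun s => Real.exp (η * (s - t₀)) / η) (Real.exp (η * (x - t₀))) x := by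
      intro x _
      have h1 : HasDerivAt (fun s : ℝ => η * (s - t₀)) η x := by
        simpa using ((hasDerivAt_id x).sub_const t₀).const_mul η
      have h3 := h1.exp.div_const η
      simpa [mul_div_assoc, mul_div_cancel_right₀ _ (ne_of_gt hη0)] using h3
    rw [intervalIntegral.integral_eq_sub_of_hasDerivAt hd
      (Continuous.intervalIntegrable (by fun_prop) _ _)]
    rw [sub_self, mul_zero, Real.exp_zero, sub_div]
  -- contraction
  have hK1 : L / η < 1 := (div_lt_one hη0).2 hη
  have hKnn : (0:ℝ) ≤ L / η := le_of_lt (div_pos hL hη0)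
  set K : NNReal := ⟨L / η, hKnn⟩ with hK
  have hcontr : ContractingWith K S := by
    constructor
    · rw [← NNReal.coe_lt_one]; exact hK1
    · apply LipschitzWith.of_dist_le_mul
      intro h₁ h₂
      rw [ContinuousMap.dist_le (by positivity)]
      intro t
      have hb : t₀ ≤ (↑t : ℝ) := t.2.1
      have hbr : (↑t : ℝ) ≤ t₀ + r := t.2.2
      set D := dist h₁ h₂ with hD
      have hD0 : 0 ≤ D := dist_nonneg
      have hi1 : Continuous fun s => G h₁ t s := (hGcont h₁).comp (Continuous.prodMk_right t)
      have hi2 : Continuous fun s => G h₂ t s := (hGcont h₂).comp (Continuous.prodMk_right t)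
      have step1 : dist (S h₁ t) (S h₂ t)
          = Real.exp (-(η * ((↑t : ℝ) - t₀))) *
            |∫ s in t₀..(↑t : ℝ), (G h₁ t s - G h₂ t s)| := by
        rw [Real.dist_eq, hS]
        simp only [ContinuousMap.coe_mk]
        rw [← mul_sub, abs_mul, abs_of_pos (Real.exp_pos _),
          intervalIntegral.integral_sub (hi1.intervalIntegrable _ _)
            (hi2.intervalIntegrable _ _)]
      have step2 : |∫ s in t₀..(↑t : ℝ), (G h₁ t s - G h₂ t s)|
          ≤ ∫ s in t₀..(↑t : ℝ), L * D * Real.exp (η * (s - t₀)) := by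
        refine le_trans (intervalIntegral.abs_integral_le_integral_abs hb) ?_
        apply intervalIntegral.integral_mono_on hb
          ((hi1.sub hi2).abs.intervalIntegrable _ _)
          (Continuous.intervalIntegrable (by fun_prop) _ _)
        intro s hs
        have hsI : s ∈ Set.Icc t₀ (t₀ + r) := ⟨hs.1, hs.2.trans hbr⟩
        have hc : ((π s : ℝ)) = s := hπcoe s hsI
        rw [hG]
        simp only []
        calc |f (↑t) (↑(π s)) (Real.exp (η * ((↑(π s):ℝ) - t₀)) * h₁ (π s))
              - f (↑t) (↑(π s)) (Real.exp (η * ((↑(π s):ℝ) - t₀)) * h₂ (π s))|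
            ≤ L * |Real.exp (η * ((↑(π s):ℝ) - t₀)) * h₁ (π s)
              - Real.exp (η * ((↑(π s):ℝ) - t₀)) * h₂ (π s)| :=
              hlip (↑t) t.2 (↑(π s)) (π s).2 _ _
          _ = L * (Real.exp (η * ((↑(π s):ℝ) - t₀)) * |h₁ (π s) - h₂ (π s)|) := by
              rw [← mul_sub, abs_mul, abs_of_pos (Real.exp_pos _)]
          _ ≤ L * (Real.exp (η * ((↑(π s):ℝ) - t₀)) * D) := by
              have := ContinuousMap.dist_apply_le_dist (f := h₁) (g := h₂) (π s)
              rw [Real.dist_eq] at this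
              gcongr
          _ = L * D * Real.exp (η * (s - t₀)) := by rw [hc]; ring
      have step3 : (∫ s in t₀..(↑t : ℝ), L * D * Real.exp (η * (s - t₀)))
          = L * D * ((Real.exp (η * ((↑t:ℝ) - t₀)) - 1) / η) := by
        rw [intervalIntegral.integral_const_mul, hexpint _ hb]
      have hA1 : 1 ≤ Real.exp (η * ((↑t:ℝ) - t₀)) :=
        Real.one_le_exp (by nlinarith)
      have hA0 : 0 < Real.exp (η * ((↑t:ℝ) - t₀)) := Real.exp_pos _
      calc dist (S h₁ t) (S h₂ t)
          ≤ Real.exp (-(η * ((↑t : ℝ) - t₀))) *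
            (L * D * ((Real.exp (η * ((↑t:ℝ) - t₀)) - 1) / η)) := by
            rw [step1]
            exact mul_le_mul_of_nonneg_left (step2.trans_eq step3) (Real.exp_pos _).le
        _ = (L * D / η) * ((Real.exp (η * ((↑t:ℝ) - t₀)) - 1)
            * (Real.exp (η * ((↑t:ℝ) - t₀)))⁻¹) := by
            rw [Real.exp_neg]; ring
        _ ≤ (L * D / η) * 1 := by
            apply mul_le_mul_of_nonneg_left _ (by positivity)
            rw [← div_eq_mul_inv, div_le_one hA0]; linarith
        _ = (K : ℝ) * D := by rw [mul_one]; show L * D / η = L / η * D; ring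
  -- fixed point
  set h₀ : C(↥(Set.Icc t₀ (t₀ + r)), ℝ) := ContractingWith.fixedPoint S hcontr with hh₀
  have hfix : S h₀ = h₀ := hcontr.fixedPoint_isFixedPt
  set Y : ℝ → ℝ := fun u => Real.exp (η * (u - t₀)) * h₀ (π u) with hY
  have hYcont : Continuous Y := by
    apply Continuous.mul
    · fun_prop
    · exact h₀.continuous.comp hπcont
  -- Y solves the equation
  have hsol : ∀ t ∈ Set.Icc t₀ (t₀ + r), Y t = ∫ s in t₀..t, f t s (Y s) := by
    intro t ht
    have hπt : π t = ⟨t, ht⟩ := by rw [hπ, Set.projIcc_of_mem hle ht]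
    have h1 : h₀ ⟨t, ht⟩ = Real.exp (-(η * (t - t₀))) * ∫ s in t₀..t, G h₀ ⟨t, ht⟩ s := by
      conv_lhs => rw [← hfix]
      rfl
    have h2 : (∫ s in t₀..t, G h₀ ⟨t, ht⟩ s) = ∫ s in t₀..t, f t s (Y s) :=
      hkey h₀ Y ⟨t, ht⟩ (fun s hs => rfl)
    show Real.exp (η * (t - t₀)) * h₀ (π t) = _
    rw [hπt, h1, h2, ← mul_assoc, ← Real.exp_add, add_neg_cancel, Real.exp_zero, one_mul]
  -- the weighted version of y
  set hy' : C(↥(Set.Icc t₀ (t₀ + r)), ℝ) :=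
    ⟨fun u => Real.exp (-(η * ((↑u : ℝ) - t₀))) * y ↑u,
      ((by fun_prop : Continuous fun u : ↥(Set.Icc t₀ (t₀ + r)) =>
        Real.exp (-(η * ((↑u : ℝ) - t₀))))).mul hy.restrict⟩ with hhy'
  have hyval : ∀ t (ht : t ∈ Set.Icc t₀ (t₀ + r)),
      y t = Real.exp (η * (t - t₀)) * hy' ⟨t, ht⟩ := by
    intro t ht
    show y t = Real.exp (η * (t - t₀)) * (Real.exp (-(η * (t - t₀))) * y t)
    rw [← mul_assoc, ← Real.exp_add, add_neg_cancel, Real.exp_zero, one_mul]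
  have hdist1 : dist hy' (S hy') ≤ ε := by
    rw [ContinuousMap.dist_le hε.le]
    intro t
    have hb : t₀ ≤ (↑t : ℝ) := t.2.1
    have h2 : (∫ s in t₀..(↑t : ℝ), G hy' t s) = ∫ s in t₀..(↑t : ℝ), f ↑t s (y s) := by
      apply hkey
      intro s hs
      have hsI : s ∈ Set.Icc t₀ (t₀ + r) := ⟨hs.1, hs.2.trans t.2.2⟩
      have hc : ((π s : ℝ)) = s := hπcoe s hsI
      show Real.exp (η * (s - t₀)) * (Real.exp (-(η * ((↑(π s) : ℝ) - t₀))) * y ↑(π s)) = y s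
      rw [hc, ← mul_assoc, ← Real.exp_add, add_neg_cancel, Real.exp_zero, one_mul]
    have heq : dist (hy' t) (S hy' t) = Real.exp (-(η * ((↑t : ℝ) - t₀))) *
        |y ↑t - ∫ s in t₀..(↑t : ℝ), f ↑t s (y s)| := by
      rw [Real.dist_eq]
      show |Real.exp (-(η * ((↑t : ℝ) - t₀))) * y ↑t -
        Real.exp (-(η * ((↑t : ℝ) - t₀))) * ∫ s in t₀..(↑t : ℝ), G hy' t s| = _
      rw [h2, ← mul_sub, abs_mul, abs_of_pos (Real.exp_pos _)]
    rw [heq]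
    have h3 : Real.exp (-(η * ((↑t : ℝ) - t₀))) ≤ 1 := by
      rw [Real.exp_le_one_iff]
      nlinarith
    calc Real.exp (-(η * ((↑t : ℝ) - t₀))) *
        |y ↑t - ∫ s in t₀..(↑t : ℝ), f ↑t s (y s)| ≤ 1 * ε :=
          mul_le_mul h3 (happrox ↑t t.2) (abs_nonneg _) zero_le_one
      _ = ε := one_mul ε
  have h1K : (0:ℝ) < 1 - L / η := by linarith
  have hdist2 : dist hy' h₀ ≤ ε / (1 - L / η) := by
    refine le_trans (hcontr.dist_le_of_fixedPoint hy' hcontr.fixedPoint_isFixedPt) ?_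
    have hKc : ((K : NNReal) : ℝ) = L / η := rfl
    rw [hKc]
    gcongr
  have hbound : ∀ t ∈ Set.Icc t₀ (t₀ + r),
      |y t - Y t| ≤ ε * Real.exp (η * r) / (1 - L / η) := by
    intro t ht
    have hπt : π t = ⟨t, ht⟩ := by rw [hπ, Set.projIcc_of_mem hle ht]
    have happ : |hy' ⟨t, ht⟩ - h₀ ⟨t, ht⟩| ≤ ε / (1 - L / η) := by
      have := ContinuousMap.dist_apply_le_dist (f := hy') (g := h₀) ⟨t, ht⟩
      rw [Real.dist_eq] at this
      exact this.trans hdist2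
    calc |y t - Y t| = Real.exp (η * (t - t₀)) * |hy' ⟨t, ht⟩ - h₀ ⟨t, ht⟩| := by
          rw [hyval t ht]
          show |Real.exp (η * (t - t₀)) * hy' ⟨t, ht⟩ -
            Real.exp (η * (t - t₀)) * h₀ (π t)| = _
          rw [hπt, ← mul_sub, abs_mul, abs_of_pos (Real.exp_pos _)]
      _ ≤ Real.exp (η * r) * (ε / (1 - L / η)) :=
          mul_le_mul (Real.exp_le_exp.2 (by nlinarith [ht.1, ht.2])) happ
            (abs_nonneg _) (Real.exp_pos _).le
      _ = ε * Real.exp (η * r) / (1 - L / η) := by ring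
  refine ⟨Y, ⟨hYcont.continuousOn, hsol, hbound⟩, ?_⟩
  -- uniqueness
  intro z hzc hzsol _ t ht
  set hz' : C(↥(Set.Icc t₀ (t₀ + r)), ℝ) :=
    ⟨fun u => Real.exp (-(η * ((↑u : ℝ) - t₀))) * z ↑u,
      ((by fun_prop : Continuous fun u : ↥(Set.Icc t₀ (t₀ + r)) =>
        Real.exp (-(η * ((↑u : ℝ) - t₀))))).mul hzc.restrict⟩ with hhz'
  have hzfix : S hz' = hz' := by
    ext u
    have h2 : (∫ s in t₀..(↑u : ℝ), G hz' u s) = ∫ s in t₀..(↑u : ℝ), f ↑u s (z s) := by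
      apply hkey
      intro s hs
      have hsI : s ∈ Set.Icc t₀ (t₀ + r) := ⟨hs.1, hs.2.trans u.2.2⟩
      have hc : ((π s : ℝ)) = s := hπcoe s hsI
      show Real.exp (η * (s - t₀)) * (Real.exp (-(η * ((↑(π s) : ℝ) - t₀))) * z ↑(π s)) = z s
      rw [hc, ← mul_assoc, ← Real.exp_add, add_neg_cancel, Real.exp_zero, one_mul]
    show Real.exp (-(η * ((↑u : ℝ) - t₀))) * (∫ s in t₀..(↑u : ℝ), G hz' u s) =
      Real.exp (-(η * ((↑u : ℝ) - t₀))) * z ↑u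
    rw [h2, ← hzsol ↑u u.2]
  have hzeq : hz' = h₀ := hcontr.fixedPoint_unique' hzfix hcontr.fixedPoint_isFixedPt
  have hπt : π t = ⟨t, ht⟩ := by rw [hπ, Set.projIcc_of_mem hle ht]
  show z t = Real.exp (η * (t - t₀)) * h₀ (π t)
  rw [hπt, ← hzeq]
  show z t = Real.exp (η * (t - t₀)) * (Real.exp (-(η * (t - t₀))) * z t)
  rw [← mul_assoc, ← Real.exp_add, add_neg_cancel, Real.exp_zero, one_mul]
end

section
/- Let $I=[t_0,t_0+r]$, $\eta>0$, $\varphi:I\to(0,\infty)$ nondecreasing continuous, and $f:I\times\mathbb{R}\to\mathbb{R}$ continuous with $|f(t,y_1)-f(t,y_2)|\le L|y_1-y_2|$ for all $t\in I$ and $y_1,y_2\in\mathbb{R}$. Define $\Theta:C(I,\mathbb{R})\to C(I,\mathbb{R})$ by $(\Theta g)(t)=\int_{t_0}^{t} f(s,g(s))\,ds$ and the generalized metric $d(g_1,g_2)=\inf\{C\in[0,\infty]: |g_1(t)-g_2(t)|e^{-\eta(t-t_0)}\le C\varphi(t) \text{ for all } t\in I\}$. Then $d(\Theta g_1,\Theta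 g_2)\le \frac{L}{\eta}\, d(g_1,g_2)$ for all $g_1,g_2\in C(I,\mathbb{R})$; in particular, $\Theta$ is strictly contractive whenever $\eta>L$. -/
open scoped ENNReal

/-- The key contraction estimate: with the weighted generalized metric
`d(g₁,g₂) = inf{C : |g₁ t - g₂ t| e^{-η(t-t₀)} ≤ C φ t on I}`, the Volterra
operator `(Θ g)(t) = ∫_{t₀}^t f(s, g(s)) ds` satisfies
`d(Θ g₁, Θ g₂) ≤ (L/η) d(g₁, g₂)` for continuous `g₁, g₂`. -/
theorem volterra_operator_contraction
    (t₀ r L η : ℝ) (hr : 0 < r) (hL : 0 < L) (hη : 0 < η)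
    (φ : ℝ → ℝ) (hφc : ContinuousOn φ (Set.Icc t₀ (t₀ + r)))
    (hφmono : MonotoneOn φ (Set.Icc t₀ (t₀ + r)))
    (hφpos : ∀ t ∈ Set.Icc t₀ (t₀ + r), 0 < φ t)
    (f : ℝ → ℝ → ℝ)
    (hf : ContinuousOn (fun p : ℝ × ℝ => f p.1 p.2) (Set.Icc t₀ (t₀ + r) ×ˢ Set.univ))
    (hlip : ∀ t ∈ Set.Icc t₀ (t₀ + r), ∀ y₁ y₂ : ℝ,
      |f t y₁ - f t y₂| ≤ L * |y₁ - y₂|)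
    (Θ : (ℝ → ℝ) → (ℝ → ℝ))
    (hΘ : ∀ g : ℝ → ℝ, ∀ t : ℝ, Θ g t = ∫ s in t₀..t, f s (g s))
    (d : (ℝ → ℝ) → (ℝ → ℝ) → ℝ≥0∞)
    (hd : ∀ g₁ g₂ : ℝ → ℝ, d g₁ g₂ =
      sInf {C : ℝ≥0∞ | ∀ t ∈ Set.Icc t₀ (t₀ + r),
        ENNReal.ofReal (|g₁ t - g₂ t| * Real.exp (-(η * (t - t₀)))) ≤
          C * ENNReal.ofReal (φ t)}) :
    ∀ g₁ g₂ : ℝ → ℝ, ContinuousOn g₁ (Set.Icc t₀ (t₀ + r)) →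
      ContinuousOn g₂ (Set.Icc t₀ (t₀ + r)) →
      d (Θ g₁) (Θ g₂) ≤ ENNReal.ofReal (L / η) * d g₁ g₂ := by
  intro g₁ g₂ hg₁ hg₂
  set I := Set.Icc t₀ (t₀ + r) with hI
  -- continuity of s ↦ f s (gᵢ s)
  have hcomp : ∀ g : ℝ → ℝ, ContinuousOn g I → ContinuousOn (fun s => f s (g s)) I := by
    intro g hg
    exact hf.comp (continuousOn_id.prodMk hg) (fun s hs => ⟨hs, trivial⟩)
  have hcont1 := hcomp g₁ hg₁
  have hcont2 := hcomp g₂ hg₂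
  -- the exponential integral
  have hexp : ∀ t : ℝ, ∫ s in t₀..t, Real.exp (η * (s - t₀)) =
      (Real.exp (η * (t - t₀)) - 1) / η := by
    intro t
    have hder : ∀ s : ℝ, HasDerivAt (fun u => Real.exp (η * (u - t₀)) / η)
        (Real.exp (η * (s - t₀))) s := by
      intro s
      have h1 : HasDerivAt (fun u : ℝ => η * (u - t₀)) η s := by
        simpa using (((hasDerivAt_id s).sub_const t₀).const_mul η)
      have h2 := (h1.exp).div_const η
      exact h2.congr_deriv (mul_div_cancel_right₀ _ hη.ne')
    have hint : IntervalIntegrable (fun s => Real.exp (η * (s - t₀))) MeasureTheory.volume t₀ t :=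
      (Real.continuous_exp.comp (continuous_const.mul (continuous_id.sub continuous_const))).intervalIntegrable t₀ t
    rw [intervalIntegral.integral_eq_sub_of_hasDerivAt (fun s _ => hder s) hint]
    simp [Real.exp_zero, sub_div]
  -- the key pointwise estimate
  have key : ∀ c : ℝ, 0 ≤ c →
      (∀ t ∈ I, |g₁ t - g₂ t| * Real.exp (-(η * (t - t₀))) ≤ c * φ t) →
      ∀ t ∈ I, |Θ g₁ t - Θ g₂ t| * Real.exp (-(η * (t - t₀))) ≤ L / η * c * φ t := by
    intro c hc hbound t ht
    obtain ⟨ht₁, ht₂⟩ := ht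
    have hsub : Set.Icc t₀ t ⊆ I := Set.Icc_subset_Icc le_rfl ht₂
    have hint1 : IntervalIntegrable (fun s => f s (g₁ s)) MeasureTheory.volume t₀ t :=
      (hcont1.mono hsub).intervalIntegrable_of_Icc ht₁
    have hint2 : IntervalIntegrable (fun s => f s (g₂ s)) MeasureTheory.volume t₀ t :=
      (hcont2.mono hsub).intervalIntegrable_of_Icc ht₁
    have hΘdiff : Θ g₁ t - Θ g₂ t = ∫ s in t₀..t, (f s (g₁ s) - f s (g₂ s)) := by
      rw [hΘ, hΘ, ← intervalIntegral.integral_sub hint1 hint2]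
    have hintF : IntervalIntegrable (fun s => |f s (g₁ s) - f s (g₂ s)|)
        MeasureTheory.volume t₀ t :=
      (((hcont1.sub hcont2).abs).mono hsub).intervalIntegrable_of_Icc ht₁
    have hintG : IntervalIntegrable (fun s => L * c * φ t * Real.exp (η * (s - t₀)))
        MeasureTheory.volume t₀ t :=
      (continuous_const.mul
        (Real.continuous_exp.comp (continuous_const.mul (continuous_id.sub continuous_const)))).intervalIntegrable t₀ t
    -- pointwise bound on the integrand
    have hptwise : ∀ s ∈ Set.Icc t₀ t,
        |f s (g₁ s) - f s (g₂ s)| ≤ L * c * φ t * Real.exp (η * (s - t₀)) := by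
      intro s hs
      have hsI : s ∈ I := hsub hs
      have h1 : |f s (g₁ s) - f s (g₂ s)| ≤ L * |g₁ s - g₂ s| := hlip s hsI _ _
      have h2 := hbound s hsI
      have h3 : φ s ≤ φ t := hφmono hsI ⟨ht₁, ht₂⟩ hs.2
      have hE : Real.exp (-(η * (s - t₀))) * Real.exp (η * (s - t₀)) = 1 := by
        rw [← Real.exp_add]; simp
      have hEpos := Real.exp_pos (η * (s - t₀))
      have hEnpos := Real.exp_pos (-(η * (s - t₀)))
      have h4 : |g₁ s - g₂ s| ≤ c * φ s * Real.exp (η * (s - t₀)) := by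
        nlinarith [abs_nonneg (g₁ s - g₂ s)]
      have hφt := hφpos t ⟨ht₁, ht₂⟩
      have hφs := hφpos s hsI
      nlinarith [mul_le_mul_of_nonneg_left h4 hL.le,
        mul_le_mul_of_nonneg_left h3 (mul_nonneg (mul_nonneg hL.le hc) hEpos.le)]
    have hchain : |Θ g₁ t - Θ g₂ t| ≤ L * c * φ t * ((Real.exp (η * (t - t₀)) - 1) / η) := by
      rw [hΘdiff]
      calc |∫ s in t₀..t, (f s (g₁ s) - f s (g₂ s))|
          ≤ ∫ s in t₀..t, |f s (g₁ s) - f s (g₂ s)| :=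
            intervalIntegral.abs_integral_le_integral_abs ht₁
        _ ≤ ∫ s in t₀..t, L * c * φ t * Real.exp (η * (s - t₀)) :=
            intervalIntegral.integral_mono_on ht₁ hintF hintG hptwise
        _ = L * c * φ t * ((Real.exp (η * (t - t₀)) - 1) / η) := by
            rw [intervalIntegral.integral_const_mul, hexp t]
    -- multiply by the exponential weight
    have hX : 0 ≤ t - t₀ := by linarith
    have hE : Real.exp (-(η * (t - t₀))) * Real.exp (η * (t - t₀)) = 1 := by
      rw [← Real.exp_add]; simp
    have hEle1 : Real.exp (-(η * (t - t₀))) ≤ 1 := by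
      rw [Real.exp_le_one_iff]; nlinarith
    have hEnpos := Real.exp_pos (-(η * (t - t₀)))
    have hφt := hφpos t ⟨ht₁, ht₂⟩
    have habs := abs_nonneg (Θ g₁ t - Θ g₂ t)
    have h5 : |Θ g₁ t - Θ g₂ t| * Real.exp (-(η * (t - t₀))) ≤
        L * c * φ t * ((Real.exp (η * (t - t₀)) - 1) / η) * Real.exp (-(η * (t - t₀))) :=
      mul_le_mul_of_nonneg_right hchain hEnpos.le
    have h6 : L * c * φ t * ((Real.exp (η * (t - t₀)) - 1) / η) * Real.exp (-(η * (t - t₀)))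
        = L * c * φ t / η * (1 - Real.exp (-(η * (t - t₀)))) := by
      have hEe : (Real.exp (η * (t - t₀)) - 1) * Real.exp (-(η * (t - t₀))) =
          1 - Real.exp (-(η * (t - t₀))) := by linear_combination hE
      rw [← hEe]; ring
    have h7 : L * c * φ t / η * (1 - Real.exp (-(η * (t - t₀)))) ≤ L / η * c * φ t := by
      have hnn : 0 ≤ L * c * φ t / η := by positivity
      have h8 : L * c * φ t / η * (1 - Real.exp (-(η * (t - t₀)))) ≤ L * c * φ t / η * 1 :=
        mul_le_mul_of_nonneg_left (by linarith) hnn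
      calc L * c * φ t / η * (1 - Real.exp (-(η * (t - t₀)))) ≤ L * c * φ t / η * 1 := h8
        _ = L / η * c * φ t := by ring
    linarith [h5, h6.le, h6.ge]
  -- now the ENNReal bookkeeping
  rw [hd, hd]
  set k := ENNReal.ofReal (L / η) with hk
  set S := {C : ℝ≥0∞ | ∀ t ∈ I,
      ENNReal.ofReal (|g₁ t - g₂ t| * Real.exp (-(η * (t - t₀)))) ≤
        C * ENNReal.ofReal (φ t)} with hS
  set T := {C : ℝ≥0∞ | ∀ t ∈ I,
      ENNReal.ofReal (|Θ g₁ t - Θ g₂ t| * Real.exp (-(η * (t - t₀)))) ≤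
        C * ENNReal.ofReal (φ t)} with hT
  have hφne : ∀ t ∈ I, ENNReal.ofReal (φ t) ≠ 0 := by
    intro t ht
    simp [ENNReal.ofReal_eq_zero, not_le, hφpos t ht]
  have hφnt : ∀ t : ℝ, ENNReal.ofReal (φ t) ≠ ⊤ := fun t => ENNReal.ofReal_ne_top
  -- sInf S ∈ S
  have hmemS : sInf S ∈ S := by
    intro t ht
    rw [← ENNReal.div_le_iff (hφne t ht) (hφnt t)]
    apply le_sInf
    intro C hC
    rw [ENNReal.div_le_iff (hφne t ht) (hφnt t)]
    exact hC t ht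
  -- it suffices to show k * sInf S ∈ T
  have hTtop : (⊤ : ℝ≥0∞) ∈ T := by
    intro t ht
    rw [ENNReal.top_mul (hφne t ht)]
    exact le_top
  have : k * sInf S ∈ T := by
    rcases eq_or_ne (sInf S) ⊤ with htop | hfin
    · rw [htop, ENNReal.mul_top]
      · exact hTtop
      · simp [hk, ENNReal.ofReal_eq_zero, not_le]
        positivity
    · set c := (sInf S).toReal with hc
      have hc0 : 0 ≤ c := ENNReal.toReal_nonneg
      have hcS : ENNReal.ofReal c = sInf S := ENNReal.ofReal_toReal hfin
      have hbound : ∀ t ∈ I, |g₁ t - g₂ t| * Real.exp (-(η * (t - t₀))) ≤ c * φ t := by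
        intro t ht
        have := hmemS t ht
        rw [← hcS, ← ENNReal.ofReal_mul hc0] at this
        have hnn : 0 ≤ c * φ t := mul_nonneg hc0 (hφpos t ht).le
        exact (ENNReal.ofReal_le_ofReal_iff hnn).mp this
      intro t ht
      have hkey := key c hc0 hbound t ht
      calc ENNReal.ofReal (|Θ g₁ t - Θ g₂ t| * Real.exp (-(η * (t - t₀))))
          ≤ ENNReal.ofReal (L / η * c * φ t) := ENNReal.ofReal_le_ofReal hkey
        _ = k * sInf S * ENNReal.ofReal (φ t) := by
            rw [← hcS, hk, ← ENNReal.ofReal_mul (by positivity),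
              ← ENNReal.ofReal_mul (by positivity : (0:ℝ) ≤ L / η * c)]
  exact sInf_le this
end

section
/- The Volterra integral equation $y(t)=\int_0^t s\, y(s)\,ds$ is Hyers–Ulam stable on $[0,2]$: for every $\varepsilon>0$ there exists a constant $K>0$ such that every continuous $y:[0,2]\to\mathbb{R}$ with $|y(t)-\int_0^t s\,y(s)\,ds|\le\varepsilon$ for all $t\in[0,2]$ satisfies $|y(t)-y_0(t)|\le K\varepsilon$ for some continuous solution $y_0$ of the equation. -/
open Real intervalIntegral in
/-- Hyers–Ulam stability of `y(t) = ∫_0^t s·y(s) ds` on `[0,2]` (even though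
the Lipschitz constant `L = 2` and `Lr = 4 > 1`). -/
theorem example_volterra_HU_stable :
    ∀ ε : ℝ, 0 < ε → ∃ K : ℝ, 0 < K ∧
      ∀ y : ℝ → ℝ, ContinuousOn y (Set.Icc (0:ℝ) 2) →
        (∀ t ∈ Set.Icc (0:ℝ) 2, |y t - ∫ s in (0:ℝ)..t, s * y s| ≤ ε) →
        ∃ y₀ : ℝ → ℝ, ContinuousOn y₀ (Set.Icc (0:ℝ) 2) ∧
          (∀ t ∈ Set.Icc (0:ℝ) 2, y₀ t = ∫ s in (0:ℝ)..t, s * y₀ s) ∧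
          (∀ t ∈ Set.Icc (0:ℝ) 2, |y t - y₀ t| ≤ K * ε) := by
  intro ε hε
  refine ⟨Real.exp 4, Real.exp_pos 4, ?_⟩
  intro y hy hyε
  refine ⟨fun _ => 0, continuousOn_const, fun t _ => by simp, ?_⟩
  -- extend y continuously to ℝ
  set z : ℝ → ℝ := fun t => y (max 0 (min t 2)) with hz_def
  have hmem : ∀ x : ℝ, max 0 (min x 2) ∈ Set.Icc (0:ℝ) 2 := fun x =>
    ⟨le_max_left _ _, max_le (by norm_num) (min_le_right _ _)⟩
  have hz : Continuous z :=
    hy.comp_continuous (continuous_const.max (continuous_id.min continuous_const)) hmem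
  have hzy : ∀ t ∈ Set.Icc (0:ℝ) 2, z t = y t := by
    intro t ht
    simp only [hz_def]
    rw [min_eq_left ht.2, max_eq_right ht.1]
  -- the integral function
  set g : ℝ → ℝ := fun t => ∫ s in (0:ℝ)..t, s * z s with hg_def
  have hcz : Continuous fun s => s * z s := continuous_id.mul hz
  have hgderiv : ∀ b : ℝ, HasDerivAt g (b * z b) b := fun b =>
    (hcz.integral_hasStrictDerivAt 0 b).hasDerivAt
  have hgcont : Continuous g :=
    continuous_iff_continuousAt.2 fun t => (hgderiv t).continuousAt
  -- integrals with z and y agree on [0,2]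
  have hint : ∀ t ∈ Set.Icc (0:ℝ) 2, g t = ∫ s in (0:ℝ)..t, s * y s := by
    intro t ht
    refine intervalIntegral.integral_congr fun s hs => ?_
    rw [Set.uIcc_of_le ht.1] at hs
    rw [hzy s ⟨hs.1, hs.2.trans ht.2⟩]
  have hbound : ∀ t ∈ Set.Icc (0:ℝ) 2, |z t - g t| ≤ ε := by
    intro t ht
    rw [hzy t ht, hint t ht]
    exact hyε t ht
  -- Grönwall
  have hgb : ∀ x ∈ Set.Icc (0:ℝ) 2, ‖g x‖ ≤ gronwallBound 0 2 (2 * ε) (x - 0) := by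
    refine norm_le_gronwallBound_of_norm_deriv_right_le (f' := fun x => x * z x)
      hgcont.continuousOn (fun x _ => (hgderiv x).hasDerivWithinAt) ?_ ?_
    · simp [hg_def]
    · intro x hx
      have h1 : |z x| ≤ |g x| + ε := by
        have := hbound x ⟨hx.1, hx.2.le⟩
        have := abs_sub_abs_le_abs_sub (z x) (g x)
        linarith
      have h2 : ‖x * z x‖ = |x| * |z x| := abs_mul _ _
      have hx2 : |x| ≤ 2 := abs_le.2 ⟨by linarith [hx.1], hx.2.le⟩
      calc ‖x * z x‖ = |x| * |z x| := h2
        _ ≤ 2 * (|g x| + ε) := by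
            apply mul_le_mul hx2 h1 (abs_nonneg _) (by norm_num)
        _ = 2 * ‖g x‖ + 2 * ε := by simp only [Real.norm_eq_abs]; ring
  -- conclude
  intro t ht
  have hg2 : ‖g t‖ ≤ ε * (Real.exp (2 * t) - 1) := by
    have := hgb t ht
    rw [gronwallBound_of_K_ne_0 (by norm_num : (2:ℝ) ≠ 0)] at this
    simpa using this.trans_eq (by ring_nf)
  have hyz : |y t - g t| ≤ ε := by rw [← hzy t ht]; exact hbound t ht
  have hexp : Real.exp (2 * t) ≤ Real.exp 4 := Real.exp_le_exp.2 (by linarith [ht.2])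
  calc |y t - 0| = |y t| := by rw [sub_zero]
    _ ≤ |y t - g t| + |g t| := by
        have := abs_sub_abs_le_abs_sub (y t) (g t); linarith [abs_add_le (y t - g t) (g t)]
    _ ≤ ε + ε * (Real.exp (2 * t) - 1) := add_le_add hyz hg2
    _ = Real.exp (2 * t) * ε := by ring
    _ ≤ Real.exp 4 * ε := by nlinarith [Real.exp_pos (2*t)]
end

section
/- The Volterra integral equation $y(t)=\int_0^t s\,y(s)\,ds$ is Hyers–Ulam–Rassias stable on $[0,2]$ with respect to $\varphi(t)=e^t$: there exists $K>0$ such that every continuous $y:[0,2]\to\mathbb{R}$ with $|y(t)-\int_0^t s\,y(s)\,ds|\le e^t$ for all $t\in[0,2]$ satisfies $|y(t)-y_0(t)|\le K e^t$ on $[0,2]$ for some continuous solution $y_0$ of the equation. -/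
open Set intervalIntegral MeasureTheory Real

/-- Hyers–Ulam–Rassias stability of `y(t) = ∫_0^t s·y(s) ds` on `[0,2]` with
respect to `φ(t) = e^t`. -/
theorem example_volterra_HUR_stable :
    ∃ K : ℝ, 0 < K ∧
      ∀ y : ℝ → ℝ, ContinuousOn y (Set.Icc (0:ℝ) 2) →
        (∀ t ∈ Set.Icc (0:ℝ) 2, |y t - ∫ s in (0:ℝ)..t, s * y s| ≤ Real.exp t) →
        ∃ y₀ : ℝ → ℝ, ContinuousOn y₀ (Set.Icc (0:ℝ) 2) ∧
          (∀ t ∈ Set.Icc (0:ℝ) 2, y₀ t = ∫ s in (0:ℝ)..t, s * y₀ s) ∧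
          (∀ t ∈ Set.Icc (0:ℝ) 2, |y t - y₀ t| ≤ K * Real.exp t) := by
  refine ⟨1 + Real.exp 6, by positivity, ?_⟩
  intro y hy hbound
  refine ⟨fun _ => 0, continuousOn_const, ?_, ?_⟩
  · intro t _; simp
  · -- main estimate
    set g : ℝ → ℝ := fun s => s * y s with hg_def
    have hgcont : ContinuousOn g (Icc (0:ℝ) 2) :=
      (continuousOn_id).mul hy
    set F : ℝ → ℝ := fun u => ∫ s in (0:ℝ)..u, g s with hF_def
    -- F is continuous on Icc 0 2
    have hginteg : IntegrableOn g (Icc (0:ℝ) 2) volume :=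
      hgcont.integrableOn_compact isCompact_Icc
    have hFcont : ContinuousOn F (Icc (0:ℝ) 2) := by
      have := intervalIntegral.continuousOn_primitive_interval
        (f := g) (a := (0:ℝ)) (b := 2) (μ := volume) (by
          rwa [Set.uIcc_of_le (by norm_num : (0:ℝ) ≤ 2)])
      rwa [Set.uIcc_of_le (by norm_num : (0:ℝ) ≤ 2)] at this
    -- derivative of F
    have hFderiv : ∀ t ∈ Ico (0:ℝ) 2, HasDerivWithinAt F (g t) (Ici t) t := by
      intro t ht
      have hmem : Icc (0:ℝ) 2 ∈ nhdsWithin t (Ioi t) := Icc_mem_nhdsGT_of_mem ht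
      have hint : IntervalIntegrable g volume 0 t := by
        apply (hgcont.mono ?_).intervalIntegrable
        rw [Set.uIcc_of_le ht.1]
        exact Icc_subset_Icc le_rfl ht.2.le
      refine intervalIntegral.integral_hasDerivWithinAt_right hint ?_ ?_
      · exact ⟨Icc (0:ℝ) 2, hmem, hgcont.aestronglyMeasurable measurableSet_Icc⟩
      · exact ((hgcont t ⟨ht.1, ht.2.le⟩).mono_of_mem_nhdsWithin hmem)
    -- |y t| ≤ exp t + |F t| on Icc
    have hyb : ∀ t ∈ Icc (0:ℝ) 2, |y t| ≤ Real.exp t + |F t| := by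
      intro t ht
      have := hbound t ht
      calc |y t| = |(y t - F t) + F t| := by ring_nf
        _ ≤ |y t - F t| + |F t| := abs_add_le _ _
        _ ≤ Real.exp t + |F t| := by exact add_le_add this le_rfl
    -- Gronwall bound on F
    have hgb : ∀ t ∈ Icc (0:ℝ) 2, ‖F t‖ ≤ gronwallBound 0 2 (2 * Real.exp 2) (t - 0) := by
      apply norm_le_gronwallBound_of_norm_deriv_right_le hFcont hFderiv
      · simp [hF_def]
      · intro t ht
        have ht' : t ∈ Icc (0:ℝ) 2 := ⟨ht.1, ht.2.le⟩
        have h1 : ‖g t‖ = t * |y t| := by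
          rw [hg_def]; simp [abs_mul, abs_of_nonneg ht.1]
        rw [h1]
        have h2 : t * |y t| ≤ 2 * (Real.exp t + |F t|) := by
          have := hyb t ht'
          have ht2 : t ≤ 2 := ht.2.le
          nlinarith [abs_nonneg (y t), abs_nonneg (F t), Real.exp_pos t, ht.1]
        have h3 : Real.exp t ≤ Real.exp 2 := Real.exp_le_exp.mpr ht.2.le
        calc t * |y t| ≤ 2 * (Real.exp t + |F t|) := h2
          _ ≤ 2 * ‖F t‖ + 2 * Real.exp 2 := by
              simp only [Real.norm_eq_abs]; linarith
    -- conclude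
    intro t ht
    have hF : |F t| ≤ Real.exp 6 - Real.exp 2 := by
      have := hgb t ht
      rw [gronwallBound_of_K_ne_0 (by norm_num : (2:ℝ) ≠ 0)] at this
      simp only [Real.norm_eq_abs, sub_zero, zero_mul, zero_add] at this
      have h4 : Real.exp (2 * t) ≤ Real.exp 4 := Real.exp_le_exp.mpr (by linarith [ht.2])
      have : |F t| ≤ 2 * Real.exp 2 / 2 * (Real.exp 4 - 1) := by
        refine this.trans ?_
        have h5 : (0:ℝ) < 2 * Real.exp 2 / 2 := by positivity
        nlinarith [Real.exp_pos (2*t)]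
      calc |F t| ≤ 2 * Real.exp 2 / 2 * (Real.exp 4 - 1) := this
        _ = Real.exp 2 * Real.exp 4 - Real.exp 2 := by ring
        _ = Real.exp 6 - Real.exp 2 := by rw [← Real.exp_add]; norm_num
    have h1 : (1:ℝ) ≤ Real.exp t := Real.one_le_exp ht.1
    have h2 : Real.exp 2 > 0 := Real.exp_pos 2
    calc |y t - 0| = |y t| := by rw [sub_zero]
      _ ≤ Real.exp t + |F t| := hyb t ht
      _ ≤ Real.exp t + Real.exp 6 := by linarith
      _ ≤ (1 + Real.exp 6) * Real.exp t := by nlinarith [Real.exp_pos 6]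
end

section
/- Let $I=[t_0,t_0+r]$ and let $\eta>L>0$. Suppose $y,y_0:I\to\mathbb{R}$ are continuous, $y_0$ satisfies $y_0(t)=\int_{t_0}^t f(s,y_0(s))\,ds$, $f$ is $L$-Lipschitz in its second variable, and $|y(t)-\int_{t_0}^t f(s,y(s))\,ds|\le \varphi(t)$ on $I$ with $\varphi$ nondecreasing, continuous, positive. Then $\sup_{t\in I} \frac{|y(t)-y_0(t)|\,e^{-\eta(t-t_0)}}{\varphi(t)} \le \frac{1}{1-L/\eta}$. -/
lemma exp_integral_aux (η t₀ t : ℝ) (hη : η ≠ 0) :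
    ∫ s in t₀..t, Real.exp (η * (s - t₀)) =
      (Real.exp (η * (t - t₀)) - 1) / η := by
  have h : ∀ s ∈ Set.uIcc t₀ t,
      HasDerivAt (fun u => Real.exp (η * (u - t₀)) / η) (Real.exp (η * (s - t₀))) s := by
    intro s _
    have h1 : HasDerivAt (fun u : ℝ => η * (u - t₀)) η s := by
      simpa using ((hasDerivAt_id s).sub_const t₀).const_mul η
    have h2 := (Real.hasDerivAt_exp (η * (s - t₀))).comp s h1
    have h3 := h2.div_const η
    rw [mul_div_cancel_right₀ _ hη] at h3
    exact h3
  have hint : IntervalIntegrable (fun s => Real.exp (η * (s - t₀))) MeasureTheory.volume t₀ t :=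
    (Real.continuous_exp.comp (by continuity)).intervalIntegrable t₀ t
  have := intervalIntegral.integral_eq_sub_of_hasDerivAt h hint
  rw [this]
  simp [sub_div]

/-- Quantitative stability estimate from the fixed point alternative:
if `y₀` is the exact solution and `y` a `φ`-approximate solution, then
`|y t - y₀ t| e^{-η(t-t₀)} / φ t ≤ 1/(1 - L/η)` for all `t ∈ I`
(equivalently, the supremum over `I` is at most `1/(1 - L/η)`). -/
theorem volterra_quantitative_estimate
    (t₀ r L η : ℝ) (hr : 0 < r) (hL : 0 < L) (hη : L < η)
    (f : ℝ → ℝ → ℝ)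
    (hf : ContinuousOn (fun p : ℝ × ℝ => f p.1 p.2) (Set.Icc t₀ (t₀ + r) ×ˢ Set.univ))
    (hlip : ∀ t ∈ Set.Icc t₀ (t₀ + r), ∀ y₁ y₂ : ℝ,
      |f t y₁ - f t y₂| ≤ L * |y₁ - y₂|)
    (φ : ℝ → ℝ) (hφc : ContinuousOn φ (Set.Icc t₀ (t₀ + r)))
    (hφmono : MonotoneOn φ (Set.Icc t₀ (t₀ + r)))
    (hφpos : ∀ t ∈ Set.Icc t₀ (t₀ + r), 0 < φ t)
    (y y₀ : ℝ → ℝ)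
    (hy : ContinuousOn y (Set.Icc t₀ (t₀ + r)))
    (hy₀ : ContinuousOn y₀ (Set.Icc t₀ (t₀ + r)))
    (hsol : ∀ t ∈ Set.Icc t₀ (t₀ + r), y₀ t = ∫ s in t₀..t, f s (y₀ s))
    (happrox : ∀ t ∈ Set.Icc t₀ (t₀ + r),
      |y t - ∫ s in t₀..t, f s (y s)| ≤ φ t) :
    ∀ t ∈ Set.Icc t₀ (t₀ + r),
      |y t - y₀ t| * Real.exp (-(η * (t - t₀))) / φ t ≤ 1 / (1 - L / η) := by
  have hη0 : (0:ℝ) < η := hL.trans hη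
  set I := Set.Icc t₀ (t₀ + r) with hI
  have ht₀I : t₀ ∈ I := by constructor <;> nlinarith
  -- the function g
  set g : ℝ → ℝ := fun t => |y t - y₀ t| * Real.exp (-(η * (t - t₀))) / φ t with hg
  have hgcont : ContinuousOn g I := by
    apply ContinuousOn.div
    · exact ((hy.sub hy₀).abs.mul (Real.continuous_exp.comp (by continuity)).continuousOn)
    · exact hφc
    · exact fun t ht => (hφpos t ht).ne'
  obtain ⟨c, hcI, hmax⟩ := isCompact_Icc.exists_isMaxOn ⟨t₀, ht₀I⟩ hgcont
  set M := g c with hM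
  have hmax' : ∀ t ∈ I, g t ≤ M := hmax
  have hM0 : 0 ≤ M := by
    apply div_nonneg (mul_nonneg (abs_nonneg _) (Real.exp_pos _).le) (hφpos c hcI).le
  have hc0 : t₀ ≤ c := hcI.1
  have hsub : Set.Icc t₀ c ⊆ I := Set.Icc_subset_Icc le_rfl hcI.2
  -- pointwise bound from maximality
  have hpt : ∀ s ∈ Set.Icc t₀ c,
      |y s - y₀ s| ≤ M * (φ c * Real.exp (η * (s - t₀))) := by
    intro s hs
    have hsI : s ∈ I := hsub hs
    have h1 : g s ≤ M := hmax' s hsI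
    have hφs : 0 < φ s := hφpos s hsI
    have h2 : |y s - y₀ s| * Real.exp (-(η * (s - t₀))) ≤ M * φ s := by
      rw [hg] at h1
      calc |y s - y₀ s| * Real.exp (-(η * (s - t₀)))
          = (|y s - y₀ s| * Real.exp (-(η * (s - t₀))) / φ s) * φ s := by
            field_simp
        _ ≤ M * φ s := mul_le_mul_of_nonneg_right h1 hφs.le
    have h3 : M * φ s ≤ M * φ c :=
      mul_le_mul_of_nonneg_left (hφmono hsI hcI hs.2) hM0
    have h4 : |y s - y₀ s| ≤ M * φ c * Real.exp (η * (s - t₀)) := by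
      have := (h2.trans h3)
      have hE : (0:ℝ) < Real.exp (η * (s - t₀)) := Real.exp_pos _
      calc |y s - y₀ s|
          = |y s - y₀ s| * Real.exp (-(η * (s - t₀))) * Real.exp (η * (s - t₀)) := by
            rw [mul_assoc, ← Real.exp_add]; simp
        _ ≤ M * φ c * Real.exp (η * (s - t₀)) :=
            mul_le_mul_of_nonneg_right this hE.le
    linarith [h4, mul_assoc M (φ c) (Real.exp (η * (s - t₀)))]
  -- continuity of the composed integrands
  have hFy : ContinuousOn (fun s => f s (y s)) I := by
    apply hf.comp (continuousOn_id.prodMk hy)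
    intro x hx; exact ⟨hx, Set.mem_univ _⟩
  have hFy₀ : ContinuousOn (fun s => f s (y₀ s)) I := by
    apply hf.comp (continuousOn_id.prodMk hy₀)
    intro x hx; exact ⟨hx, Set.mem_univ _⟩
  have huIcc : Set.uIcc t₀ c ⊆ I := by
    rw [Set.uIcc_of_le hc0]; exact hsub
  have hint1 : IntervalIntegrable (fun s => f s (y s)) MeasureTheory.volume t₀ c :=
    (hFy.mono huIcc).intervalIntegrable
  have hint2 : IntervalIntegrable (fun s => f s (y₀ s)) MeasureTheory.volume t₀ c :=
    (hFy₀.mono huIcc).intervalIntegrable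
  have hintd : IntervalIntegrable (fun s => |f s (y s) - f s (y₀ s)|) MeasureTheory.volume t₀ c :=
    ((hFy.mono huIcc).sub (hFy₀.mono huIcc)).abs.intervalIntegrable
  have hintL : IntervalIntegrable (fun s => L * |y s - y₀ s|) MeasureTheory.volume t₀ c :=
    (((hy.mono huIcc).sub (hy₀.mono huIcc)).abs.const_smul L).intervalIntegrable
  have hintE : IntervalIntegrable (fun s => L * (M * (φ c * Real.exp (η * (s - t₀)))))
      MeasureTheory.volume t₀ c := by
    apply Continuous.intervalIntegrable
    exact continuous_const.mul (continuous_const.mul (continuous_const.mul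
      (Real.continuous_exp.comp (continuous_const.mul (continuous_id.sub continuous_const)))))
  -- the key inequality at c
  have hkey : |y c - y₀ c| ≤ φ c + L / η * M * φ c * Real.exp (η * (c - t₀)) := by
    have heq : y c - y₀ c = (y c - ∫ s in t₀..c, f s (y s)) +
        ∫ s in t₀..c, (f s (y s) - f s (y₀ s)) := by
      rw [intervalIntegral.integral_sub hint1 hint2, hsol c hcI]; ring
    have h1 : |y c - y₀ c| ≤ φ c + |∫ s in t₀..c, (f s (y s) - f s (y₀ s))| := by
      rw [heq]
      exact (abs_add_le _ _).trans (add_le_add_left (happrox c hcI) _)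
    have h2 : |∫ s in t₀..c, (f s (y s) - f s (y₀ s))| ≤
        ∫ s in t₀..c, |f s (y s) - f s (y₀ s)| :=
      intervalIntegral.abs_integral_le_integral_abs hc0
    have h3 : (∫ s in t₀..c, |f s (y s) - f s (y₀ s)|) ≤
        ∫ s in t₀..c, L * |y s - y₀ s| := by
      apply intervalIntegral.integral_mono_on hc0 hintd hintL
      intro s hs
      exact hlip s (hsub hs) (y s) (y₀ s)
    have h4 : (∫ s in t₀..c, L * |y s - y₀ s|) ≤
        ∫ s in t₀..c, L * (M * (φ c * Real.exp (η * (s - t₀)))) := by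
      apply intervalIntegral.integral_mono_on hc0 hintL hintE
      intro s hs
      exact mul_le_mul_of_nonneg_left (hpt s hs) hL.le
    have h5 : (∫ s in t₀..c, L * (M * (φ c * Real.exp (η * (s - t₀))))) =
        L * M * φ c * ((Real.exp (η * (c - t₀)) - 1) / η) := by
      rw [intervalIntegral.integral_const_mul]
      rw [show (fun s => M * (φ c * Real.exp (η * (s - t₀)))) =
        (fun s => (M * φ c) * Real.exp (η * (s - t₀))) by funext s; ring]
      rw [intervalIntegral.integral_const_mul, exp_integral_aux η t₀ c hη0.ne']
      ring
    have h6 : L * M * φ c * ((Real.exp (η * (c - t₀)) - 1) / η) ≤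
        L / η * M * φ c * Real.exp (η * (c - t₀)) := by
      have hnn : 0 ≤ L * M * φ c := mul_nonneg (mul_nonneg hL.le hM0) (hφpos c hcI).le
      have h7 : (Real.exp (η * (c - t₀)) - 1) / η ≤ Real.exp (η * (c - t₀)) / η := by
        gcongr
        linarith
      calc L * M * φ c * ((Real.exp (η * (c - t₀)) - 1) / η)
          ≤ L * M * φ c * (Real.exp (η * (c - t₀)) / η) :=
            mul_le_mul_of_nonneg_left h7 hnn
        _ = L / η * M * φ c * Real.exp (η * (c - t₀)) := by ring
    linarith
  -- derive M ≤ 1/(1 - L/η)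
  have hMle : M ≤ 1 + L / η * M := by
    have hφcpos : 0 < φ c := hφpos c hcI
    have hEpos : (0:ℝ) < Real.exp (-(η * (c - t₀))) := Real.exp_pos _
    have : M = |y c - y₀ c| * Real.exp (-(η * (c - t₀))) / φ c := rfl
    rw [this]
    rw [div_le_iff₀ hφcpos]
    have hmul := mul_le_mul_of_nonneg_right hkey hEpos.le
    have hEE : Real.exp (η * (c - t₀)) * Real.exp (-(η * (c - t₀))) = 1 := by
      rw [← Real.exp_add]; simp
    have hE1 : Real.exp (-(η * (c - t₀))) ≤ 1 := by
      apply Real.exp_le_one_iff.mpr; nlinarith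
    calc |y c - y₀ c| * Real.exp (-(η * (c - t₀)))
        ≤ (φ c + L / η * M * φ c * Real.exp (η * (c - t₀))) * Real.exp (-(η * (c - t₀))) := hmul
      _ = φ c * Real.exp (-(η * (c - t₀))) + L / η * M * φ c := by
          rw [add_mul, mul_assoc (L / η * M * φ c)]
          rw [hEE]; ring
      _ ≤ (1 + L / η * M) * φ c := by
          have h1 : φ c * Real.exp (-(η * (c - t₀))) ≤ φ c :=
            mul_le_of_le_one_right hφcpos.le hE1
          nlinarith
  have hLη : L / η < 1 := (div_lt_one hη0).mpr hη
  have hMfinal : M ≤ 1 / (1 - L / η) := by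
    rw [le_div_iff₀ (by linarith)]
    nlinarith
  intro t ht
  exact (hmax' t ht).trans hMfinal
end

section
/- Let $E_1,E_2$ be real Banach spaces, $\varepsilon>0$, and $f:E_1\to E_2$ satisfy $\|f(x+y)-f(x)-f(y)\|\le\varepsilon$ for all $x,y\in E_1$. Then the limit $L(x)=\lim_{n\to\infty} 2^{-n} f(2^n x)$ exists for every $x\in E_1$, and $L$ is the unique additive map $E_1\to E_2$ satisfying $\|f(x)-L(x)\|\le\varepsilon$ for all $x\in E_1$. -/
open Filter

/-- Hyers' theorem: if `f : E₁ → E₂` between real Banach spaces satisfies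
`‖f(x+y) - f x - f y‖ ≤ ε`, then `L x = lim_{n→∞} 2⁻ⁿ f(2ⁿ x)` exists for
every `x`, and `L` is the unique additive map with `‖f x - L x‖ ≤ ε`. -/
theorem hyers_stability
    {E₁ E₂ : Type*} [NormedAddCommGroup E₁] [NormedSpace ℝ E₁] [CompleteSpace E₁]
    [NormedAddCommGroup E₂] [NormedSpace ℝ E₂] [CompleteSpace E₂]
    (ε : ℝ) (hε : 0 < ε) (f : E₁ → E₂)
    (hf : ∀ x y : E₁, ‖f (x + y) - f x - f y‖ ≤ ε) :
    ∃ L : E₁ → E₂,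
      (∀ x : E₁, Filter.Tendsto
        (fun n : ℕ => (((2:ℝ) ^ n)⁻¹) • f (((2:ℝ) ^ n) • x))
        Filter.atTop (nhds (L x))) ∧
      (∀ x y : E₁, L (x + y) = L x + L y) ∧
      (∀ x : E₁, ‖f x - L x‖ ≤ ε) ∧
      (∀ L' : E₁ → E₂, (∀ x y : E₁, L' (x + y) = L' x + L' y) →
        (∀ x : E₁, ‖f x - L' x‖ ≤ ε) → L' = L) := by
  set g : ℕ → E₁ → E₂ := fun n x => (((2:ℝ) ^ n)⁻¹) • f (((2:ℝ) ^ n) • x) with hg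
  have hpow : ∀ n : ℕ, (0:ℝ) < 2 ^ n := fun n => by positivity
  -- consecutive terms bound
  have key : ∀ (n : ℕ) (y : E₁), ‖g (n+1) y - g n y‖ ≤ ε / 2 ^ (n+1) := by
    intro n y
    have h2 := hf (((2:ℝ)^n) • y) (((2:ℝ)^n) • y)
    have e1 : ((2:ℝ)^n) • y + ((2:ℝ)^n) • y = ((2:ℝ)^(n+1)) • y := by
      rw [← add_smul]; congr 1; ring
    rw [e1] at h2
    have e2 : g (n+1) y - g n y =
        (((2:ℝ)^(n+1))⁻¹) • (f (((2:ℝ)^(n+1)) • y) - f (((2:ℝ)^n) • y) - f (((2:ℝ)^n) • y)) := by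
      simp only [hg]
      have h2n : ((2:ℝ)^n)⁻¹ = 2 * ((2:ℝ)^(n+1))⁻¹ := by
        rw [pow_succ]; field_simp
      rw [h2n]
      module
    rw [e2, norm_smul, Real.norm_eq_abs, abs_of_pos (inv_pos.mpr (hpow (n+1))),
      div_eq_inv_mul]
    exact mul_le_mul_of_nonneg_left h2 (by positivity)
  -- Cauchy
  have hcauchy : ∀ x, CauchySeq (fun n => g n x) := by
    intro x
    apply cauchySeq_of_le_geometric (1/2) (ε/2) (by norm_num)
    intro n
    rw [dist_eq_norm, norm_sub_rev]
    calc ‖g (n+1) x - g n x‖ ≤ ε / 2 ^ (n+1) := key n x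
      _ = ε/2 * (1/2)^n := by rw [div_pow, pow_succ]; ring
  have hL : ∀ x, ∃ l, Tendsto (fun n => g n x) atTop (nhds l) :=
    fun x => cauchySeq_tendsto_of_complete (hcauchy x)
  choose L hLx using hL
  -- limit of ε/2^n
  have hzero : Tendsto (fun n : ℕ => ε / 2 ^ n) atTop (nhds 0) := by
    have h := (tendsto_pow_atTop_nhds_zero_of_lt_one (by norm_num : (0:ℝ) ≤ 1/2)
      (by norm_num : (1/2:ℝ) < 1)).const_mul ε
    simpa [div_pow, div_eq_mul_inv, mul_comm] using h
  -- distance from f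
  have hbnd : ∀ (n : ℕ) (x : E₁), ‖g n x - f x‖ ≤ ε - ε / 2 ^ n := by
    intro n x
    induction n with
    | zero => simp [hg]
    | succ n ih =>
      have h2 : ε / 2 ^ n = 2 * (ε / 2 ^ (n+1)) := by
        rw [pow_succ]; field_simp
      calc ‖g (n+1) x - f x‖ ≤ ‖g (n+1) x - g n x‖ + ‖g n x - f x‖ :=
            norm_sub_le_norm_sub_add_norm_sub _ _ _
        _ ≤ ε / 2 ^ (n+1) + (ε - ε / 2 ^ n) := add_le_add (key n x) ih
        _ = ε - ε / 2 ^ (n+1) := by rw [h2]; ring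
  have hLe : ∀ x, ‖f x - L x‖ ≤ ε := by
    intro x
    have h1 : Tendsto (fun n => ‖f x - g n x‖) atTop (nhds ‖f x - L x‖) :=
      (tendsto_const_nhds.sub (hLx x)).norm
    refine le_of_tendsto h1 (Eventually.of_forall fun n => ?_)
    rw [norm_sub_rev]
    exact (hbnd n x).trans (sub_le_self _ (by positivity))
  -- additivity
  have hadd : ∀ x y, L (x+y) = L x + L y := by
    intro x y
    have hdiff : Tendsto (fun n => g n (x+y) - (g n x + g n y)) atTop (nhds 0) := by
      apply squeeze_zero_norm _ hzero
      intro n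
      have e : g n (x+y) - (g n x + g n y) =
          ((2:ℝ)^n)⁻¹ • (f (((2:ℝ)^n) • x + ((2:ℝ)^n) • y)
            - f (((2:ℝ)^n) • x) - f (((2:ℝ)^n) • y)) := by
        simp only [hg, smul_add]
        module
      rw [e, norm_smul, Real.norm_eq_abs, abs_of_pos (inv_pos.mpr (hpow n)), div_eq_inv_mul]
      exact mul_le_mul_of_nonneg_left (hf _ _) (by positivity)
    have h2 : Tendsto (fun n => g n (x+y)) atTop (nhds (L x + L y)) := by
      have h3 := ((hLx x).add (hLx y)).add hdiff
      simpa using h3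
    exact tendsto_nhds_unique (hLx (x+y)) h2
  refine ⟨L, hLx, hadd, hLe, ?_⟩
  intro L' hL'add hL'bnd
  have h0 : L' 0 = L' 0 + L' 0 := by simpa using hL'add 0 0
  have hz : L' 0 = 0 := add_left_cancel (h0.symm.trans (add_zero (L' 0)).symm)
  have hnsmul : ∀ (n : ℕ) (x : E₁), L' (n • x) = n • L' x := by
    intro n x
    induction n with
    | zero => simpa using hz
    | succ n ih => rw [succ_nsmul, hL'add, ih, succ_nsmul]
  have hpsmul : ∀ (n : ℕ) (x : E₁), L' (((2:ℝ)^n) • x) = ((2:ℝ)^n) • L' x := by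
    intro n x
    have e1 : ((2:ℝ)^n) • x = (2^n : ℕ) • x := by
      rw [← Nat.cast_smul_eq_nsmul ℝ]; norm_num
    have e2 : ((2:ℝ)^n) • L' x = (2^n : ℕ) • L' x := by
      rw [← Nat.cast_smul_eq_nsmul ℝ]; norm_num
    rw [e1, e2, hnsmul]
  funext x
  have hd : Tendsto (fun n => L' x - g n x) atTop (nhds 0) := by
    apply squeeze_zero_norm _ hzero
    intro n
    have e : L' x - g n x =
        ((2:ℝ)^n)⁻¹ • (L' (((2:ℝ)^n) • x) - f (((2:ℝ)^n) • x)) := by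
      simp only [hg, hpsmul, smul_sub]
      rw [inv_smul_smul₀ (ne_of_gt (hpow n))]
    rw [e, norm_smul, Real.norm_eq_abs, abs_of_pos (inv_pos.mpr (hpow n)), div_eq_inv_mul]
    refine mul_le_mul_of_nonneg_left ?_ (by positivity)
    rw [norm_sub_rev]; exact hL'bnd _
  have htend : Tendsto (fun n => g n x) atTop (nhds (L' x)) := by
    have h3 := (tendsto_const_nhds (x := L' x) (f := atTop)).sub hd
    simpa using h3
  exact tendsto_nhds_unique htend (hLx x)
end

section
/- Let $E_1,E_2$ be real Banach spaces, $\theta>0$, $p\in[0,1)$, and let $f:E_1\to E_2$ satisfy $\|f(x+y)-f(x)-f(y)\|\le \theta(\|x\|^p+\|y\|^p)$ for all $x,y\in E_1$. Then there exists a unique additive map $L:E_1\to E_2$ with $\|f(x)-L(x)\|\le \frac{2\theta}{2-2^p}\|x\|^p$ for all $x\in E_1$. -/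
/-- Rassias' theorem: if `f : E₁ → E₂` between real Banach spaces satisfies
`‖f(x+y) - f x - f y‖ ≤ θ(‖x‖^p + ‖y‖^p)` with `θ > 0` and `0 ≤ p < 1`, then
there is a unique additive `L` with `‖f x - L x‖ ≤ (2θ/(2 - 2^p))‖x‖^p`. -/
theorem rassias_stability
    {E₁ E₂ : Type*} [NormedAddCommGroup E₁] [NormedSpace ℝ E₁] [CompleteSpace E₁]
    [NormedAddCommGroup E₂] [NormedSpace ℝ E₂] [CompleteSpace E₂]
    (θ p : ℝ) (hθ : 0 < θ) (hp : p ∈ Set.Ico (0:ℝ) 1) (f : E₁ → E₂)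
    (hf : ∀ x y : E₁, ‖f (x + y) - f x - f y‖ ≤ θ * (‖x‖ ^ p + ‖y‖ ^ p)) :
    ∃! L : E₁ → E₂,
      (∀ x y : E₁, L (x + y) = L x + L y) ∧
      (∀ x : E₁, ‖f x - L x‖ ≤ 2 * θ / (2 - 2 ^ p) * ‖x‖ ^ p) := by
  obtain ⟨hp0, hp1⟩ := hp
  set s : ℝ := (2:ℝ) ^ p with hs_def
  have hs0 : 0 < s := Real.rpow_pos_of_pos (by norm_num) p
  have hs2 : s < 2 := by
    have := Real.rpow_lt_rpow_of_exponent_lt (x := (2:ℝ)) one_lt_two hp1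
    simpa using this
  set r : ℝ := s / 2 with hr_def
  have hr0 : 0 ≤ r := by positivity
  have hr1 : r < 1 := by rw [hr_def, div_lt_one (by norm_num)]; exact hs2
  -- the approximating sequence
  set a : E₁ → ℕ → E₂ := fun x n => ((2:ℝ)^n)⁻¹ • f ((2:ℝ)^n • x) with ha_def
  have ha0 : ∀ x, a x 0 = f x := by intro x; simp [ha_def]
  have h2pos : ∀ n : ℕ, (0:ℝ) < 2 ^ n := fun n => by positivity
  -- norm of scaled point
  have hpow : ∀ (n : ℕ) (x : E₁), ‖(2:ℝ)^n • x‖ ^ p = s ^ n * ‖x‖ ^ p := by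
    intro n x
    rw [norm_smul, Real.norm_eq_abs, abs_of_pos (h2pos n),
      Real.mul_rpow (le_of_lt (h2pos n)) (norm_nonneg x)]
    congr 1
    rw [← Real.rpow_natCast (2:ℝ) n, ← Real.rpow_natCast s n, hs_def,
      ← Real.rpow_mul (by norm_num), ← Real.rpow_mul (by norm_num), mul_comm]
  -- basic doubling estimate
  have h2 : ∀ y : E₁, ‖f ((2:ℝ) • y) - (2:ℝ) • f y‖ ≤ 2 * θ * ‖y‖ ^ p := by
    intro y
    have h := hf y y
    have e1 : (2:ℝ) • y = y + y := two_smul ℝ y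
    have e2 : (2:ℝ) • f y = f y + f y := two_smul ℝ (f y)
    rw [e1, e2]
    calc ‖f (y + y) - (f y + f y)‖ = ‖f (y + y) - f y - f y‖ := by rw [sub_sub]
      _ ≤ θ * (‖y‖ ^ p + ‖y‖ ^ p) := h
      _ = 2 * θ * ‖y‖ ^ p := by ring
  -- step estimate
  have hstep : ∀ (x : E₁) (n : ℕ), ‖a x (n+1) - a x n‖ ≤ θ * ‖x‖ ^ p * r ^ n := by
    intro x n
    have e1 : a x (n+1) - a x n
        = ((2:ℝ)^(n+1))⁻¹ • (f ((2:ℝ) • ((2:ℝ)^n • x)) - (2:ℝ) • f ((2:ℝ)^n • x)) := by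
      rw [smul_sub]
      congr 1
      · simp [ha_def, smul_smul, ← pow_succ']
      · rw [smul_smul]
        simp [ha_def]
        congr 1
        rw [pow_succ]
        field_simp
    rw [e1, norm_smul, Real.norm_eq_abs, abs_of_pos (by positivity)]
    calc ((2:ℝ)^(n+1))⁻¹ * ‖f ((2:ℝ) • ((2:ℝ)^n • x)) - (2:ℝ) • f ((2:ℝ)^n • x)‖
        ≤ ((2:ℝ)^(n+1))⁻¹ * (2 * θ * ‖(2:ℝ)^n • x‖ ^ p) := by
          apply mul_le_mul_of_nonneg_left (h2 _) (by positivity)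
      _ = ((2:ℝ)^(n+1))⁻¹ * (2 * θ * (s ^ n * ‖x‖ ^ p)) := by rw [hpow]
      _ = θ * ‖x‖ ^ p * r ^ n := by
          rw [hr_def, div_pow, pow_succ]
          field_simp
  -- Cauchy
  have hcauchy : ∀ x : E₁, CauchySeq (a x) := by
    intro x
    apply cauchySeq_of_le_geometric r (θ * ‖x‖ ^ p) hr1
    intro n
    rw [dist_eq_norm, norm_sub_rev]
    exact hstep x n
  have hconv : ∀ x : E₁, ∃ l : E₂, Filter.Tendsto (a x) Filter.atTop (nhds l) :=
    fun x => cauchySeq_tendsto_of_complete (hcauchy x)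
  choose L hL using hconv
  have h2s : (0:ℝ) < 2 - s := by linarith
  -- the error bound
  have hbound : ∀ x : E₁, ‖f x - L x‖ ≤ 2 * θ / (2 - s) * ‖x‖ ^ p := by
    intro x
    have := dist_le_of_le_geometric_of_tendsto₀ r (θ * ‖x‖ ^ p) hr1
      (fun n => by rw [dist_eq_norm, norm_sub_rev]; exact hstep x n) (hL x)
    rw [dist_eq_norm, ha0] at this
    calc ‖f x - L x‖ ≤ θ * ‖x‖ ^ p / (1 - r) := this
      _ = 2 * θ / (2 - s) * ‖x‖ ^ p := by
          rw [hr_def]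
          field_simp
  have geom_tendsto : ∀ C : ℝ, Filter.Tendsto (fun n : ℕ => C * r ^ n) Filter.atTop (nhds 0) := by
    intro C
    have := (tendsto_pow_atTop_nhds_zero_of_lt_one hr0 hr1).const_mul C
    simpa using this
  -- additivity
  have hadd : ∀ x y : E₁, L (x + y) = L x + L y := by
    intro x y
    have key : Filter.Tendsto (fun n => a (x+y) n - a x n - a y n) Filter.atTop (nhds 0) := by
      refine squeeze_zero_norm (a := fun n => θ * (‖x‖ ^ p + ‖y‖ ^ p) * r ^ n) (fun n => ?_) (geom_tendsto _)
      have e : a (x+y) n - a x n - a y n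
          = ((2:ℝ)^n)⁻¹ • (f ((2:ℝ)^n • x + (2:ℝ)^n • y) - f ((2:ℝ)^n • x) - f ((2:ℝ)^n • y)) := by
        simp [ha_def, smul_add, smul_sub]
      rw [e, norm_smul, Real.norm_eq_abs, abs_of_pos (by positivity : (0:ℝ) < ((2:ℝ)^n)⁻¹)]
      calc ((2:ℝ)^n)⁻¹ * ‖f ((2:ℝ)^n • x + (2:ℝ)^n • y) - f ((2:ℝ)^n • x) - f ((2:ℝ)^n • y)‖
          ≤ ((2:ℝ)^n)⁻¹ * (θ * (‖(2:ℝ)^n • x‖ ^ p + ‖(2:ℝ)^n • y‖ ^ p)) := by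
            apply mul_le_mul_of_nonneg_left (hf _ _) (by positivity)
        _ = θ * (‖x‖ ^ p + ‖y‖ ^ p) * r ^ n := by
            rw [hpow, hpow, hr_def, div_pow]
            field_simp
    have key2 : Filter.Tendsto (fun n => a (x+y) n - a x n - a y n) Filter.atTop
        (nhds (L (x+y) - L x - L y)) := ((hL (x+y)).sub (hL x)).sub (hL y)
    have := tendsto_nhds_unique key2 key
    rw [sub_sub, sub_eq_zero] at this
    rw [this]
  refine ⟨L, ⟨hadd, hbound⟩, ?_⟩
  -- uniqueness
  intro L' ⟨hadd', hbound'⟩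
  funext x
  have hL'pow : ∀ n : ℕ, L' ((2:ℝ)^n • x) = (2:ℝ)^n • L' x := by
    intro n
    induction n with
    | zero => simp
    | succ n ih =>
      have e : (2:ℝ)^(n+1) • x = (2:ℝ)^n • x + (2:ℝ)^n • x := by
        rw [pow_succ, mul_two, add_smul]
      rw [e, hadd', ih, pow_succ, mul_two, add_smul]
  have htend : Filter.Tendsto (a x) Filter.atTop (nhds (L' x)) := by
    rw [tendsto_iff_norm_sub_tendsto_zero]
    refine squeeze_zero_norm (a := fun n => (2 * θ / (2 - s) * ‖x‖ ^ p) * r ^ n) (fun n => ?_) (geom_tendsto _)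
    rw [norm_norm]
    have e : a x n - L' x = ((2:ℝ)^n)⁻¹ • (f ((2:ℝ)^n • x) - L' ((2:ℝ)^n • x)) := by
      rw [hL'pow, smul_sub, smul_smul]
      simp [ha_def, inv_mul_cancel₀ (ne_of_gt (h2pos n))]
    rw [e, norm_smul, Real.norm_eq_abs, abs_of_pos (by positivity : (0:ℝ) < ((2:ℝ)^n)⁻¹)]
    calc ((2:ℝ)^n)⁻¹ * ‖f ((2:ℝ)^n • x) - L' ((2:ℝ)^n • x)‖
        ≤ ((2:ℝ)^n)⁻¹ * (2 * θ / (2 - s) * ‖(2:ℝ)^n • x‖ ^ p) := by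
          apply mul_le_mul_of_nonneg_left (hbound' _) (by positivity)
      _ = (2 * θ / (2 - s) * ‖x‖ ^ p) * r ^ n := by
          rw [hpow, hr_def, div_pow]
          field_simp
  exact tendsto_nhds_unique htend (hL x)
end
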